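/- arXiv:2509.18784 — 10 statements merged into one kernel-verified Lean document; each statement's English description precedes it below -/
import Mathlib

section
/- For every n ≥ 5, the monophonic number of the Kneser graph K(n,2) equals 3. -/
open SimpleGraph

variable {V : Type*}

/-- A walk is an induced path if it is a path and every edge of the graph between
vertices of the walk is an edge of the walk. -/
def IsInducedPath (G : SimpleGraph V) {u v : V} (p : G.Walk u v) : Prop :=
  p.IsPath ∧ ∀ a b : V, a ∈ p.support → b ∈ p.support → G.Adj a b → p.toSubgraph.Adj a b

/-- The monophonic interval: all vertices lying on some induced `u,v`-path. -/
def monoInterval (G : SimpleGraph V) (u v : V) : Set V :=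
  {w | ∃ p : G.Walk u v, IsInducedPath G p ∧ w ∈ p.support}

/-- A set `S` is monophonic if every vertex lies in the monophonic interval
of some pair of vertices of `S`. -/
def IsMonophonicSet (G : SimpleGraph V) (S : Set V) : Prop :=
  ∀ w : V, ∃ x ∈ S, ∃ y ∈ S, w ∈ monoInterval G x y

/-- The monophonic number: least cardinality of a monophonic set. -/
noncomputable def monophonicNumber (G : SimpleGraph V) : ℕ :=
  sInf {n : ℕ | ∃ S : Finset V, S.card = n ∧ IsMonophonicSet G (S : Set V)}

/-- A graph is strongly 2-monophonic if every pair of non-adjacent vertices is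
a monophonic set. -/
def Strongly2Monophonic (G : SimpleGraph V) : Prop :=
  ∀ x y : V, x ≠ y → ¬ G.Adj x y → IsMonophonicSet G {x, y}

/-- A closed walk is an induced cycle if it is a cycle and every edge of the graph
between vertices of the walk is an edge of the walk. -/
def IsInducedCycle (G : SimpleGraph V) {a : V} (w : G.Walk a a) : Prop :=
  w.IsCycle ∧ ∀ u v : V, u ∈ w.support → v ∈ w.support → G.Adj u v → w.toSubgraph.Adj u v

/-- The Kneser graph `K(n,r)`: vertices are `r`-subsets of `[n]`, adjacent iff disjoint. -/
def kneser (n r : ℕ) : SimpleGraph {s : Finset (Fin n) // s.card = r} where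
  Adj a b := a ≠ b ∧ Disjoint a.1 b.1
  symm := ⟨fun _ _ h => ⟨h.1.symm, h.2.symm⟩⟩
  loopless := ⟨fun _ h => h.1 rfl⟩

/-- The Johnson graph `J(n,r)`: vertices are `r`-subsets of `[n]`, adjacent iff the
intersection has `r-1` elements. -/
def johnson (n r : ℕ) : SimpleGraph {s : Finset (Fin n) // s.card = r} where
  Adj a b := a ≠ b ∧ (a.1 ∩ b.1).card = r - 1
  symm := ⟨fun _ _ h => ⟨h.1.symm, by rw [Finset.inter_comm]; exact h.2⟩⟩
  loopless := ⟨fun _ h => h.1 rfl⟩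


namespace KneserMonoAux

variable {V : Type*}

section General
variable {G : SimpleGraph V}

lemma mem_monoInterval_two {x y m : V} (h1 : G.Adj x m) (h2 : G.Adj m y)
    (nxy : ¬ G.Adj x y) (dxy : x ≠ y) : m ∈ monoInterval G x y := by
  refine ⟨Walk.cons h1 (Walk.cons h2 Walk.nil), ⟨?_, ?_⟩, by simp⟩
  · rw [Walk.cons_isPath_iff, Walk.cons_isPath_iff]
    refine ⟨⟨Walk.IsPath.nil, by simp [h2.ne]⟩, ?_⟩
    simp [h1.ne, dxy]
  · intro a b ha hb hadj
    simp only [Walk.support_cons, Walk.support_nil, List.mem_cons, List.mem_singleton,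
      List.not_mem_nil, or_false] at ha hb
    simp only [Walk.toSubgraph, SimpleGraph.Subgraph.sup_adj, subgraphOfAdj_adj,
      singletonSubgraph_adj, Pi.bot_apply]
    rcases ha with rfl | rfl | rfl <;> rcases hb with rfl | rfl | rfl <;>
      first
        | exact absurd hadj (G.irrefl)
        | exact absurd hadj nxy
        | exact absurd hadj.symm nxy
        | simp [Sym2.eq_swap]

lemma mem_monoInterval_three {x y z m : V} (h1 : G.Adj x z) (h2 : G.Adj z m) (h3 : G.Adj m y)
    (nxm : ¬ G.Adj x m) (nxy : ¬ G.Adj x y) (nzy : ¬ G.Adj z y)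
    (dxm : x ≠ m) (dxy : x ≠ y) (dzy : z ≠ y) : m ∈ monoInterval G x y := by
  refine ⟨Walk.cons h1 (Walk.cons h2 (Walk.cons h3 Walk.nil)), ⟨?_, ?_⟩, by simp⟩
  · rw [Walk.cons_isPath_iff, Walk.cons_isPath_iff, Walk.cons_isPath_iff]
    refine ⟨⟨⟨Walk.IsPath.nil, by simp [h3.ne]⟩, by simp [h2.ne, dzy]⟩, ?_⟩
    simp [h1.ne, dxm, dxy]
  · intro a b ha hb hadj
    simp only [Walk.support_cons, Walk.support_nil, List.mem_cons, List.mem_singleton,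
      List.not_mem_nil, or_false] at ha hb
    simp only [Walk.toSubgraph, SimpleGraph.Subgraph.sup_adj, subgraphOfAdj_adj,
      singletonSubgraph_adj, Pi.bot_apply]
    rcases ha with rfl | rfl | rfl | rfl <;> rcases hb with rfl | rfl | rfl | rfl <;>
      first
        | exact absurd hadj (G.irrefl)
        | exact absurd hadj nxy
        | exact absurd hadj.symm nxy
        | exact absurd hadj nxm
        | exact absurd hadj.symm nxm
        | exact absurd hadj nzy
        | exact absurd hadj.symm nzy
        | simp [Sym2.eq_swap]


lemma induced_mem_edges {x y a b : V} {p : G.Walk x y} (hp : IsInducedPath G p)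
    (ha : a ∈ p.support) (hb : b ∈ p.support) (hadj : G.Adj a b) : s(a, b) ∈ p.edges :=
  (p.mem_edges_toSubgraph).mp (SimpleGraph.Subgraph.mem_edgeSet.mpr (hp.2 a b ha hb hadj))

lemma uniq_start {x y u v : V} (p : G.Walk x y) (hp : p.IsPath)
    (hu : s(u, x) ∈ p.edges) (hv : s(v, x) ∈ p.edges) : u = v := by
  cases p with
  | nil => simp at hu
  | cons h q =>
    rename_i z
    rw [Walk.cons_isPath_iff] at hp
    have key : ∀ t : V, s(t, x) ∈ (Walk.cons h q).edges → t = z := by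
      intro t ht
      rw [Walk.edges_cons, List.mem_cons] at ht
      rcases ht with ht | ht
      · rw [Sym2.eq_iff] at ht
        rcases ht with ⟨rfl, rfl⟩ | ⟨rfl, -⟩
        · exact absurd h (G.irrefl)
        · rfl
      · exact absurd (q.snd_mem_support_of_mem_edges ht) hp.2
    rw [key u hu, key v hv]

lemma uniq_end {x y u v : V} (p : G.Walk x y) (hp : p.IsPath)
    (hu : s(u, y) ∈ p.edges) (hv : s(v, y) ∈ p.edges) : u = v := by
  apply uniq_start p.reverse hp.reverse <;>
    rw [Walk.edges_reverse, List.mem_reverse] <;> assumption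

lemma support_inter {x y w u : V} (q : G.Walk x w) (r : G.Walk w y)
    (hp : (q.append r).IsPath) (hq : u ∈ q.support) (hr : u ∈ r.support) : u = w := by
  by_contra hne
  have hnd := hp.support_nodup
  rw [Walk.support_append] at hnd
  have hmem : u ∈ r.support.tail := by
    rw [r.support_eq_cons] at hr
    rcases List.mem_cons.mp hr with rfl | h
    · exact absurd rfl hne
    · exact h
  exact (List.disjoint_of_nodup_append hnd) hq hmem

lemma no_cross {x y w u v : V} (q : G.Walk x w) (r : G.Walk w y)
    (hp : (q.append r).IsPath) (hq : u ∈ q.support) (hu : u ≠ w)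
    (hr : v ∈ r.support) (hv : v ≠ w) (he : s(u, v) ∈ (q.append r).edges) : False := by
  rw [Walk.edges_append, List.mem_append] at he
  rcases he with he | he
  · exact hv (support_inter q r hp (q.snd_mem_support_of_mem_edges he) hr)
  · exact hu (support_inter q r hp hq (r.fst_mem_support_of_mem_edges he))

lemma monoInterval_self (G : SimpleGraph V) (x : V) : monoInterval G x x ⊆ {x} := by
  rintro w ⟨p, ⟨hp, -⟩, hw⟩
  rw [Walk.isPath_iff_eq_nil] at hp
  subst hp
  simpa using hw

lemma mem_monoInterval_self (G : SimpleGraph V) (x : V) : x ∈ monoInterval G x x := by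
  refine ⟨Walk.nil, ⟨Walk.IsPath.nil, ?_⟩, by simp⟩
  intro a b ha hb hadj
  simp only [Walk.support_nil, List.mem_singleton] at ha hb
  subst ha; subst hb; exact absurd hadj (G.irrefl)

lemma monoInterval_symm_subset (G : SimpleGraph V) (x y : V) :
    monoInterval G y x ⊆ monoInterval G x y := by
  rintro w ⟨p, ⟨hp, hind⟩, hw⟩
  refine ⟨p.reverse, ⟨hp.reverse, ?_⟩, by rwa [Walk.support_reverse, List.mem_reverse]⟩
  intro a b ha hb hadj
  rw [Walk.support_reverse, List.mem_reverse] at ha hb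
  rw [Walk.toSubgraph_reverse]
  exact hind a b ha hb hadj

lemma monoInterval_adj (G : SimpleGraph V) {x y : V} (hxy : G.Adj x y) :
    monoInterval G x y ⊆ {x, y} := by
  rintro w ⟨p, ⟨hp, hind⟩, hw⟩
  have he : s(x, y) ∈ p.edges :=
    induced_mem_edges ⟨hp, hind⟩ p.start_mem_support p.end_mem_support hxy
  cases p with
  | nil => exact absurd hxy (G.irrefl)
  | cons h q =>
    rename_i z
    rw [Walk.cons_isPath_iff] at hp
    by_cases hzy : z = y
    · subst hzy
      have hnil := Walk.isPath_iff_eq_nil.mp hp.1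
      subst hnil
      simp only [Walk.support_cons, Walk.support_nil, List.mem_cons, List.mem_singleton,
        List.not_mem_nil, or_false] at hw
      rcases hw with rfl | rfl
      · exact Set.mem_insert _ _
      · exact Set.mem_insert_of_mem _ rfl
    · rw [Walk.edges_cons, List.mem_cons] at he
      rcases he with he | he
      · rw [Sym2.eq_iff] at he
        rcases he with ⟨-, h1⟩ | ⟨h2, h3⟩
        · exact absurd h1.symm hzy
        · subst h3; exact absurd hxy (G.irrefl)
      · exact absurd (q.fst_mem_support_of_mem_edges he) hp.2

end General

section Kneser
variable {n : ℕ}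

abbrev KV (n : ℕ) := {s : Finset (Fin n) // s.card = 2}

lemma kneser_adj {u v : KV n} (h : Disjoint u.1 v.1) : (kneser n 2).Adj u v := by
  refine ⟨?_, h⟩
  intro he
  rw [he, disjoint_self] at h
  have := v.2
  rw [h, Finset.bot_eq_empty] at this
  simp at this

lemma kneser_not_adj {u v : KV n} {a : Fin n} (ha : a ∈ u.1) (hb : a ∈ v.1) :
    ¬ (kneser n 2).Adj u v := fun h => (Finset.disjoint_left.mp h.2 ha) hb

lemma pair_struct {u : KV n} {a : Fin n} (ha : a ∈ u.1) :
    ∃ b, b ≠ a ∧ u.1 = {a, b} := by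
  obtain ⟨c, d, hcd, hu⟩ := Finset.card_eq_two.mp u.2
  rw [hu, Finset.mem_insert, Finset.mem_singleton] at ha
  rcases ha with rfl | rfl
  · exact ⟨d, hcd.symm, hu⟩
  · exact ⟨c, hcd, by rw [hu, Finset.pair_comm]⟩

lemma pair_eq {u : KV n} {a b : Fin n} (ha : a ∈ u.1) (hb : b ∈ u.1) (hab : a ≠ b) :
    u.1 = {a, b} := by
  refine (Finset.eq_of_subset_of_card_le ?_ ?_).symm
  · intro t ht
    rw [Finset.mem_insert, Finset.mem_singleton] at ht
    rcases ht with rfl | rfl <;> assumption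
  · rw [u.2, Finset.card_pair hab]

lemma key {α β γ : Fin n} (hab : α ≠ β) (hag : α ≠ γ) (hbg : β ≠ γ)
    {x y w : KV n} (hx : x.1 = {α, β}) (hy : y.1 = {α, γ}) (hw : w.1 = {β, γ}) :
    w ∉ monoInterval (kneser n 2) x y := by
  have hαx : α ∈ x.1 := by rw [hx]; simp
  have hβx : β ∈ x.1 := by rw [hx]; simp
  have hαy : α ∈ y.1 := by rw [hy]; simp
  have hγy : γ ∈ y.1 := by rw [hy]; simp
  have hβw : β ∈ w.1 := by rw [hw]; simp
  have hγw : γ ∈ w.1 := by rw [hw]; simp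
  have hγx : γ ∉ x.1 := by rw [hx]; simp [Ne.symm hag, Ne.symm hbg]
  have hβy : β ∉ y.1 := by rw [hy]; simp [Ne.symm hab, hbg]
  have hαw : α ∉ w.1 := by rw [hw]; simp [hab, hag]
  have hxw : x ≠ w := fun h => hγx (by rw [h]; exact hγw)
  have hyw : y ≠ w := fun h => hαw (by rw [← h]; exact hαy)
  rintro ⟨p, hip, hwp⟩
  have hpath := hip.1
  set q := p.takeUntil w hwp with hq
  set r := p.dropUntil w hwp with hr
  have hspec : q.append r = p := by rw [hq, hr]; exact p.take_spec hwp
  have hqr : (q.append r).IsPath := by rw [hspec]; exact hpath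
  have hq_path : q.IsPath := by rw [hq]; exact hpath.takeUntil hwp
  have hr_path : r.IsPath := by rw [hr]; exact hpath.dropUntil hwp
  have hq_sub : ∀ {u : KV n}, u ∈ q.support → u ∈ p.support := by
    rw [hq]; exact fun h => p.support_takeUntil_subset hwp h
  have hr_sub : ∀ {u : KV n}, u ∈ r.support → u ∈ p.support := by
    rw [hr]; exact fun h => p.support_dropUntil_subset hwp h
  -- the neighbor a of w on the q side
  obtain ⟨a, hwa, q1, hq1⟩ := Walk.exists_eq_cons_of_ne (Ne.symm hxw) q.reverse
  have haw_e : s(a, w) ∈ q.edges := by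
    have h1 : s(w, a) ∈ q.reverse.edges := by rw [hq1, Walk.edges_cons]; exact List.mem_cons_self
    rw [Walk.edges_reverse, List.mem_reverse] at h1
    rw [Sym2.eq_swap]; exact h1
  have haq : a ∈ q.support := by
    have h1 : a ∈ q.reverse.support := by
      rw [hq1, Walk.support_cons]; exact List.mem_cons_of_mem _ q1.start_mem_support
    rwa [Walk.support_reverse, List.mem_reverse] at h1
  -- the neighbor b of w on the r side
  obtain ⟨b, hwb, r1, hr1⟩ := Walk.exists_eq_cons_of_ne (Ne.symm hyw) r
  have hbw_e : s(w, b) ∈ r.edges := by rw [hr1, Walk.edges_cons]; exact List.mem_cons_self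
  have hbr : b ∈ r.support := by
    rw [hr1, Walk.support_cons]; exact List.mem_cons_of_mem _ r1.start_mem_support
  have haw : a ≠ w := hwa.ne'
  have hbw : b ≠ w := hwb.ne'
  have hdwa : Disjoint w.1 a.1 := hwa.2
  have hdwb : Disjoint w.1 b.1 := hwb.2
  have hβa : β ∉ a.1 := fun h => Finset.disjoint_left.mp hdwa hβw h
  have hγa : γ ∉ a.1 := fun h => Finset.disjoint_left.mp hdwa hγw h
  have hβb : β ∉ b.1 := fun h => Finset.disjoint_left.mp hdwb hβw h
  have hγb : γ ∉ b.1 := fun h => Finset.disjoint_left.mp hdwb hγw h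
  -- α ∈ a
  have hαa : α ∈ a.1 := by
    by_contra hno
    have hday : Disjoint a.1 y.1 := by
      rw [Finset.disjoint_right]
      intro u hu
      rw [hy, Finset.mem_insert, Finset.mem_singleton] at hu
      rcases hu with rfl | rfl
      · exact hno
      · exact hγa
    have he : s(a, y) ∈ p.edges :=
      induced_mem_edges hip (hq_sub haq) p.end_mem_support (kneser_adj hday)
    rw [← hspec] at he
    exact no_cross q r hqr haq haw r.end_mem_support hyw he
  -- α ∈ b
  have hαb : α ∈ b.1 := by
    by_contra hno
    have hdbx : Disjoint b.1 x.1 := by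
      rw [Finset.disjoint_right]
      intro u hu
      rw [hx, Finset.mem_insert, Finset.mem_singleton] at hu
      rcases hu with rfl | rfl
      · exact hno
      · exact hβb
    have he : s(x, b) ∈ p.edges :=
      induced_mem_edges hip p.start_mem_support (hr_sub hbr) ((kneser_adj hdbx).symm)
    rw [← hspec] at he
    exact no_cross q r hqr q.start_mem_support hxw hbr hbw he
  obtain ⟨s, hsα, has⟩ := pair_struct hαa
  obtain ⟨t, htα, hbt⟩ := pair_struct hαb
  have hsa : s ∈ a.1 := by rw [has]; simp
  have htb : t ∈ b.1 := by rw [hbt]; simp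
  have hsw : s ∉ w.1 := fun h => Finset.disjoint_left.mp hdwa h hsa
  have htw : t ∉ w.1 := fun h => Finset.disjoint_left.mp hdwb h htb
  have hsβ : s ≠ β := fun h => hsw (by rw [h]; exact hβw)
  have hsγ : s ≠ γ := fun h => hsw (by rw [h]; exact hγw)
  have htβ : t ≠ β := fun h => htw (by rw [h]; exact hβw)
  have htγ : t ≠ γ := fun h => htw (by rw [h]; exact hγw)
  have hab' : a ≠ b := fun h => haw (support_inter q r hqr haq (by rw [h]; exact hbr))
  have hst : s ≠ t := by
    intro h
    exact hab' (Subtype.ext (by rw [has, hbt, h]))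
  -- c : the path-neighbor of x
  obtain ⟨c, hxc, q2, hq2⟩ := Walk.exists_eq_cons_of_ne hxw q
  have hcq : c ∈ q.support := by
    rw [hq2, Walk.support_cons]; exact List.mem_cons_of_mem _ q2.start_mem_support
  have hxc_e : s(x, c) ∈ q.edges := by rw [hq2, Walk.edges_cons]; exact List.mem_cons_self
  have hdxc : Disjoint x.1 c.1 := hxc.2
  have hαc : α ∉ c.1 := fun h => Finset.disjoint_left.mp hdxc hαx h
  have hβc : β ∉ c.1 := fun h => Finset.disjoint_left.mp hdxc hβx h
  have hcw : c ≠ w := fun h => hβc (by rw [h]; exact hβw)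
  have hγc : γ ∈ c.1 := by
    by_contra hno
    have hdcw : Disjoint c.1 w.1 := by
      rw [Finset.disjoint_right]
      intro u hu
      rw [hw, Finset.mem_insert, Finset.mem_singleton] at hu
      rcases hu with rfl | rfl
      · exact hβc
      · exact hno
    have he : s(c, w) ∈ p.edges :=
      induced_mem_edges hip (hq_sub hcq) (hr_sub r.start_mem_support) (kneser_adj hdcw)
    rw [← hspec, Walk.edges_append, List.mem_append] at he
    rcases he with he | he
    · have hca : c = a := uniq_end q hq_path he haw_e
      rw [hca] at hαc
      exact hαc hαa
    · exact hcw (support_inter q r hqr hcq (r.fst_mem_support_of_mem_edges he))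
  have htc : t ∈ c.1 := by
    by_contra hno
    have hdcb : Disjoint c.1 b.1 := by
      rw [Finset.disjoint_right]
      intro u hu
      rw [hbt, Finset.mem_insert, Finset.mem_singleton] at hu
      rcases hu with rfl | rfl
      · exact hαc
      · exact hno
    have he : s(c, b) ∈ p.edges :=
      induced_mem_edges hip (hq_sub hcq) (hr_sub hbr) (kneser_adj hdcb)
    rw [← hspec] at he
    exact no_cross q r hqr hcq hcw hbr hbw he
  have hc_eq : c.1 = {γ, t} := pair_eq hγc htc (Ne.symm htγ)
  -- e : the path-neighbor of y
  obtain ⟨e, hye, r2, hr2⟩ := Walk.exists_eq_cons_of_ne hyw r.reverse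
  have her : e ∈ r.support := by
    have h1 : e ∈ r.reverse.support := by
      rw [hr2, Walk.support_cons]; exact List.mem_cons_of_mem _ r2.start_mem_support
    rwa [Walk.support_reverse, List.mem_reverse] at h1
  have hye_e : s(e, y) ∈ r.edges := by
    have h1 : s(y, e) ∈ r.reverse.edges := by rw [hr2, Walk.edges_cons]; exact List.mem_cons_self
    rw [Walk.edges_reverse, List.mem_reverse] at h1
    rw [Sym2.eq_swap]; exact h1
  have hdye : Disjoint y.1 e.1 := hye.2
  have hαe : α ∉ e.1 := fun h => Finset.disjoint_left.mp hdye hαy h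
  have hγe : γ ∉ e.1 := fun h => Finset.disjoint_left.mp hdye hγy h
  have hew : e ≠ w := fun h => hγe (by rw [h]; exact hγw)
  have hβe : β ∈ e.1 := by
    by_contra hno
    have hdew : Disjoint e.1 w.1 := by
      rw [Finset.disjoint_right]
      intro u hu
      rw [hw, Finset.mem_insert, Finset.mem_singleton] at hu
      rcases hu with rfl | rfl
      · exact hno
      · exact hγe
    have he2 : s(e, w) ∈ p.edges :=
      induced_mem_edges hip (hr_sub her) (hr_sub r.start_mem_support) (kneser_adj hdew)
    rw [← hspec, Walk.edges_append, List.mem_append] at he2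
    rcases he2 with he2 | he2
    · exact hew (support_inter q r hqr (q.fst_mem_support_of_mem_edges he2) her)
    · have heb : e = b := uniq_start r hr_path he2 (by rw [Sym2.eq_swap]; exact hbw_e)
      rw [heb] at hαe
      exact hαe hαb
  have hse : s ∈ e.1 := by
    by_contra hno
    have hdae : Disjoint a.1 e.1 := by
      rw [Finset.disjoint_left]
      intro u hu
      rw [has, Finset.mem_insert, Finset.mem_singleton] at hu
      rcases hu with rfl | rfl
      · exact hαe
      · exact hno
    have he2 : s(a, e) ∈ p.edges :=
      induced_mem_edges hip (hq_sub haq) (hr_sub her) (kneser_adj hdae)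
    rw [← hspec] at he2
    exact no_cross q r hqr haq haw her hew he2
  have he_eq : e.1 = {β, s} := pair_eq hβe hse (Ne.symm hsβ)
  -- final contradiction : c and e must intersect, but cannot
  have hdce : Disjoint c.1 e.1 := by
    rw [hc_eq, he_eq, Finset.disjoint_left]
    intro u hu hu2
    rw [Finset.mem_insert, Finset.mem_singleton] at hu hu2
    rcases hu with rfl | rfl <;> rcases hu2 with h | h
    · exact hbg h.symm
    · exact hsγ h.symm
    · exact htβ h
    · exact hst h.symm
  have he2 : s(c, e) ∈ p.edges :=
    induced_mem_edges hip (hq_sub hcq) (hr_sub her) (kneser_adj hdce)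
  rw [← hspec] at he2
  exact no_cross q r hqr hcq hcw her hew he2

lemma kv_ne {u v : KV n} {m : Fin n} (hm : m ∈ u.1) (hm' : m ∉ v.1) : u ≠ v :=
  fun h => hm' (h ▸ hm)

lemma three_elems (hn : 5 ≤ n) : ∃ a b c : Fin n, a ≠ b ∧ a ≠ c ∧ b ≠ c :=
  ⟨⟨0, by omega⟩, ⟨1, by omega⟩, ⟨2, by omega⟩,
    by simp [Fin.ext_iff], by simp [Fin.ext_iff], by simp [Fin.ext_iff]⟩

lemma exists_fresh (hn : 5 ≤ n) (w : KV n) {a b c : Fin n} (hab : a ≠ b) (hac : a ≠ c)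
    (hbc : b ≠ c) (hmem : a ∈ w.1) :
    ∃ δ : Fin n, δ ∉ w.1 ∧ δ ≠ a ∧ δ ≠ b ∧ δ ≠ c := by
  have hT : ({a, b, c} : Finset (Fin n)).card = 3 :=
    Finset.card_eq_three.mpr ⟨a, b, c, hab, hac, hbc, rfl⟩
  have hint : 1 ≤ (w.1 ∩ ({a, b, c} : Finset (Fin n))).card :=
    Finset.card_pos.mpr ⟨a, Finset.mem_inter.mpr ⟨hmem, by simp⟩⟩
  have hun : (w.1 ∪ ({a, b, c} : Finset (Fin n))).card ≤ 4 := by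
    have h := Finset.card_union_add_card_inter w.1 ({a, b, c} : Finset (Fin n))
    rw [w.2, hT] at h
    omega
  by_contra hno
  push_neg at hno
  have hall : ∀ δ : Fin n, δ ∈ w.1 ∪ ({a, b, c} : Finset (Fin n)) := by
    intro δ
    rw [Finset.mem_union]
    by_cases h : δ ∈ w.1
    · exact Or.inl h
    · right
      simp only [Finset.mem_insert, Finset.mem_singleton]
      by_cases h1 : δ = a
      · exact Or.inl h1
      by_cases h2 : δ = b
      · exact Or.inr (Or.inl h2)
      exact Or.inr (Or.inr (hno δ h h1 h2))
  have hle : (Finset.univ : Finset (Fin n)).card ≤ (w.1 ∪ ({a, b, c} : Finset (Fin n))).card :=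
    Finset.card_le_card (fun δ _ => hall δ)
  rw [Finset.card_univ, Fintype.card_fin] at hle
  omega

lemma U1 {α β γ δ : Fin n} (hab : α ≠ β) (hag : α ≠ γ) (hbg : β ≠ γ)
    (hda : δ ≠ α) (hdb : δ ≠ β) (hdg : δ ≠ γ)
    {x y : KV n} (hx : x.1 = {α, β}) (hy : y.1 = {β, γ})
    (w : KV n) (hwa : α ∈ w.1) (hwb : β ∉ w.1) (hwg : γ ∉ w.1) (hwd : δ ∉ w.1) :
    w ∈ monoInterval (kneser n 2) x y := by
  have hβx : β ∈ x.1 := by rw [hx]; simp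
  have hαx : α ∈ x.1 := by rw [hx]; simp
  have hβy : β ∈ y.1 := by rw [hy]; simp
  have hγy : γ ∈ y.1 := by rw [hy]; simp
  obtain ⟨z, hz⟩ : ∃ z : KV n, z.1 = {γ, δ} := ⟨⟨_, Finset.card_pair (Ne.symm hdg)⟩, rfl⟩
  have hγz : γ ∈ z.1 := by rw [hz]; simp
  apply mem_monoInterval_three (z := z)
  · apply kneser_adj
    rw [hx, hz, Finset.disjoint_left]
    intro u hu hu2
    rw [Finset.mem_insert, Finset.mem_singleton] at hu hu2
    rcases hu with rfl | rfl <;> rcases hu2 with h | h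
    · exact hag h
    · exact hda h.symm
    · exact hbg h
    · exact hdb h.symm
  · apply kneser_adj
    rw [hz, Finset.disjoint_left]
    intro u hu
    rw [Finset.mem_insert, Finset.mem_singleton] at hu
    rcases hu with rfl | rfl
    · exact hwg
    · exact hwd
  · apply kneser_adj
    rw [hy, Finset.disjoint_right]
    intro u hu
    rw [Finset.mem_insert, Finset.mem_singleton] at hu
    rcases hu with rfl | rfl
    · exact hwb
    · exact hwg
  · exact kneser_not_adj hαx hwa
  · exact kneser_not_adj hβx hβy
  · exact kneser_not_adj hγz hγy
  · intro h
    exact hwb (by rw [← h]; exact hβx)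
  · intro h
    have hγ : γ ∈ x.1 := by rw [h]; exact hγy
    rw [hx, Finset.mem_insert, Finset.mem_singleton] at hγ
    rcases hγ with h2 | h2
    · exact hag h2.symm
    · exact hbg h2.symm
  · intro h
    have hβ : β ∈ z.1 := by rw [h]; exact hβy
    rw [hz, Finset.mem_insert, Finset.mem_singleton] at hβ
    rcases hβ with h2 | h2
    · exact hbg h2
    · exact hdb h2.symm

lemma upper (hn : 5 ≤ n) :
    ∃ S : Finset (KV n), S.card = 3 ∧ IsMonophonicSet (kneser n 2) (S : Set (KV n)) := by
  obtain ⟨a, b, c, hab, hac, hbc⟩ := three_elems hn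
  obtain ⟨v0, hv0⟩ : ∃ v : KV n, v.1 = {a, b} := ⟨⟨_, Finset.card_pair hab⟩, rfl⟩
  obtain ⟨v1, hv1⟩ : ∃ v : KV n, v.1 = {a, c} := ⟨⟨_, Finset.card_pair hac⟩, rfl⟩
  obtain ⟨v2, hv2⟩ : ∃ v : KV n, v.1 = {b, c} := ⟨⟨_, Finset.card_pair hbc⟩, rfl⟩
  have hb0 : b ∈ v0.1 := by rw [hv0]; simp
  have ha0 : a ∈ v0.1 := by rw [hv0]; simp
  have ha1 : a ∈ v1.1 := by rw [hv1]; simp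
  have hc1 : c ∈ v1.1 := by rw [hv1]; simp
  have hb2 : b ∈ v2.1 := by rw [hv2]; simp
  have h01 : v0 ≠ v1 := kv_ne hb0 (by rw [hv1]; simp [Ne.symm hab, hbc])
  have h02 : v0 ≠ v2 := kv_ne ha0 (by rw [hv2]; simp [hab, hac])
  have h12 : v1 ≠ v2 := kv_ne ha1 (by rw [hv2]; simp [hab, hac])
  refine ⟨{v0, v1, v2}, Finset.card_eq_three.mpr ⟨v0, v1, v2, h01, h02, h12, rfl⟩, ?_⟩
  intro w
  have hm0 : v0 ∈ (({v0, v1, v2} : Finset (KV n)) : Set (KV n)) := by simp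
  have hm1 : v1 ∈ (({v0, v1, v2} : Finset (KV n)) : Set (KV n)) := by simp
  have hm2 : v2 ∈ (({v0, v1, v2} : Finset (KV n)) : Set (KV n)) := by simp
  by_cases h0 : a ∈ w.1 <;> by_cases h1 : b ∈ w.1 <;> by_cases h2 : c ∈ w.1
  · exact ⟨v0, hm0, v0, hm0,
      by rw [show w = v0 from Subtype.ext (by rw [hv0]; exact pair_eq h0 h1 hab)]
         exact mem_monoInterval_self _ _⟩
  · exact ⟨v0, hm0, v0, hm0,
      by rw [show w = v0 from Subtype.ext (by rw [hv0]; exact pair_eq h0 h1 hab)]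
         exact mem_monoInterval_self _ _⟩
  · exact ⟨v1, hm1, v1, hm1,
      by rw [show w = v1 from Subtype.ext (by rw [hv1]; exact pair_eq h0 h2 hac)]
         exact mem_monoInterval_self _ _⟩
  · obtain ⟨δ, hδw, hδa, hδb, hδc⟩ := exists_fresh hn w hab hac hbc h0
    exact ⟨v0, hm0, v2, hm2, U1 hab hac hbc hδa hδb hδc hv0 hv2 w h0 h1 h2 hδw⟩
  · exact ⟨v2, hm2, v2, hm2,
      by rw [show w = v2 from Subtype.ext (by rw [hv2]; exact pair_eq h1 h2 hbc)]
         exact mem_monoInterval_self _ _⟩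
  · obtain ⟨δ, hδw, hδb, hδa, hδc⟩ := exists_fresh hn w (Ne.symm hab) hbc hac h1
    exact ⟨v0, hm0, v1, hm1, U1 (Ne.symm hab) hbc hac hδb hδa hδc
      (hv0.trans (Finset.pair_comm a b)) hv1 w h1 h0 h2 hδw⟩
  · obtain ⟨δ, hδw, hδc, hδa, hδb⟩ := exists_fresh hn w (Ne.symm hac) (Ne.symm hbc) hab h2
    exact ⟨v1, hm1, v0, hm0, U1 (Ne.symm hac) (Ne.symm hbc) hab hδc hδa hδb
      (hv1.trans (Finset.pair_comm a c)) hv0 w h2 h0 h1 hδw⟩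
  · have hd1 : Disjoint v0.1 w.1 := by
      rw [hv0, Finset.disjoint_left]
      intro u hu
      rw [Finset.mem_insert, Finset.mem_singleton] at hu
      rcases hu with rfl | rfl
      · exact h0
      · exact h1
    have hd2 : Disjoint w.1 v1.1 := by
      rw [hv1, Finset.disjoint_right]
      intro u hu
      rw [Finset.mem_insert, Finset.mem_singleton] at hu
      rcases hu with rfl | rfl
      · exact h0
      · exact h2
    exact ⟨v0, hm0, v1, hm1, mem_monoInterval_two (kneser_adj hd1) (kneser_adj hd2)
      (kneser_not_adj ha0 ha1) h01⟩

lemma lower (hn : 5 ≤ n) (S : Finset (KV n)) (hS : S.card ≤ 2) :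
    ¬ IsMonophonicSet (kneser n 2) (S : Set (KV n)) := by
  intro hm
  obtain ⟨a, b, c, hab, hac, hbc⟩ := three_elems hn
  obtain ⟨v0, hv0⟩ : ∃ v : KV n, v.1 = {a, b} := ⟨⟨_, Finset.card_pair hab⟩, rfl⟩
  obtain ⟨v1, hv1⟩ : ∃ v : KV n, v.1 = {a, c} := ⟨⟨_, Finset.card_pair hac⟩, rfl⟩
  have h01 : v0 ≠ v1 := kv_ne (show b ∈ v0.1 by rw [hv0]; simp)
      (by rw [hv1]; simp [Ne.symm hab, hbc])
  obtain ⟨x, y, hcov⟩ : ∃ x y : KV n, ∀ z ∈ S, z = x ∨ z = y := by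
    rcases Finset.eq_empty_or_nonempty S with rfl | ⟨x, hxS⟩
    · exact ⟨v0, v0, by simp⟩
    · by_cases h1 : ∀ z ∈ S, z = x
      · exact ⟨x, x, fun z hz => Or.inl (h1 z hz)⟩
      · push_neg at h1
        obtain ⟨y, hyS, hyx⟩ := h1
        refine ⟨x, y, fun z hz => ?_⟩
        by_contra hcon
        push_neg at hcon
        have hsub : ({z, x, y} : Finset (KV n)) ⊆ S := by
          intro u hu
          simp only [Finset.mem_insert, Finset.mem_singleton] at hu
          rcases hu with rfl | rfl | rfl <;> assumption
        have h3 : ({z, x, y} : Finset (KV n)).card = 3 :=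
          Finset.card_eq_three.mpr ⟨z, x, y, hcon.1, hcon.2, Ne.symm hyx, rfl⟩
        have hle := Finset.card_le_card hsub
        omega
  have H : ∀ z : KV n, z = x ∨ z = y ∨ z ∈ monoInterval (kneser n 2) x y := by
    intro z
    obtain ⟨u, huS, v, hvS, hz⟩ := hm z
    rw [Finset.mem_coe] at huS hvS
    rcases hcov u huS with rfl | rfl <;> rcases hcov v hvS with rfl | rfl
    · exact Or.inl (monoInterval_self _ _ hz)
    · exact Or.inr (Or.inr hz)
    · exact Or.inr (Or.inr (monoInterval_symm_subset _ _ _ hz))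
    · exact Or.inr (Or.inl (monoInterval_self _ _ hz))
  by_cases hxy : x = y
  · subst hxy
    have hv0x : v0 = x := by
      rcases H v0 with h | h | h
      exacts [h, h, monoInterval_self _ _ h]
    have hv1x : v1 = x := by
      rcases H v1 with h | h | h
      exacts [h, h, monoInterval_self _ _ h]
    exact h01 (hv0x.trans hv1x.symm)
  · by_cases hadj : (kneser n 2).Adj x y
    · obtain ⟨a', ha'⟩ : x.1.Nonempty := Finset.card_pos.mp (by rw [x.2]; norm_num)
      obtain ⟨b', hb'⟩ : y.1.Nonempty := Finset.card_pos.mp (by rw [y.2]; norm_num)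
      have hne : a' ≠ b' := fun h => Finset.disjoint_left.mp hadj.2 ha' (h ▸ hb')
      obtain ⟨z, hz⟩ : ∃ z : KV n, z.1 = {a', b'} := ⟨⟨_, Finset.card_pair hne⟩, rfl⟩
      have hzx : z ≠ x := kv_ne (show b' ∈ z.1 by rw [hz]; simp)
          (Finset.disjoint_right.mp hadj.2 hb')
      have hzy : z ≠ y := kv_ne (show a' ∈ z.1 by rw [hz]; simp)
          (Finset.disjoint_left.mp hadj.2 ha')
      rcases H z with h | h | h
      · exact hzx h
      · exact hzy h
      · have h2 := monoInterval_adj _ hadj h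
        simp only [Set.mem_insert_iff, Set.mem_singleton_iff] at h2
        rcases h2 with h2 | h2
        · exact hzx h2
        · exact hzy h2
    · have hnd : ¬ Disjoint x.1 y.1 := fun hd => hadj (kneser_adj hd)
      obtain ⟨α, hαx, hαy⟩ := Finset.not_disjoint_iff.mp hnd
      obtain ⟨β, hβα, hxx⟩ := pair_struct hαx
      obtain ⟨γ, hγα, hyy⟩ := pair_struct hαy
      have hbg : β ≠ γ := fun h => hxy (Subtype.ext (by rw [hxx, hyy, h]))
      obtain ⟨wv, hwv⟩ : ∃ v : KV n, v.1 = {β, γ} := ⟨⟨_, Finset.card_pair hbg⟩, rfl⟩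
      have hwx : wv ≠ x := kv_ne (show γ ∈ wv.1 by rw [hwv]; simp)
          (by rw [hxx]; simp [hγα, Ne.symm hbg])
      have hwy : wv ≠ y := kv_ne (show β ∈ wv.1 by rw [hwv]; simp)
          (by rw [hyy]; simp [hβα, hbg])
      rcases H wv with h | h | h
      · exact hwx h
      · exact hwy h
      · exact key (Ne.symm hβα) (Ne.symm hγα) hbg hxx hyy hwv h

end Kneser

end KneserMonoAux

open KneserMonoAux in
theorem stmt1 (n : ℕ) (hn : 5 ≤ n) : monophonicNumber (kneser n 2) = 3 := by
  obtain ⟨S, hcard, hmono⟩ := upper hn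
  have hmem : 3 ∈ {m : ℕ | ∃ S : Finset (KV n), S.card = m ∧
      IsMonophonicSet (kneser n 2) (S : Set (KV n))} := ⟨S, hcard, hmono⟩
  apply le_antisymm
  · exact Nat.sInf_le hmem
  · refine le_csInf ⟨3, hmem⟩ ?_
    rintro m ⟨T, rfl, hT⟩
    by_contra hlt
    push_neg at hlt
    exact lower hn T (by omega) hT
end

section
/- In the Kneser graph K(n,2) with n ≥ 5, no pair of vertices forms a monophonic set; in particular, for u = {1,2} and v = {1,3}, the vertex {2,3} does not lie on any induced u,v-path. -/
open SimpleGraph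

variable {V : Type*}

private lemma pair_eq_of {α : Type*} [DecidableEq α] {S : Finset α} (hS : S.card = 2)
    {x y : α} (hx : x ∈ S) (hy : y ∈ S) (hxy : x ≠ y) : S = {x, y} := by
  refine (Finset.eq_of_subset_of_card_le ?_ ?_).symm
  · intro z hz
    rcases Finset.mem_insert.mp hz with h | h
    · exact h ▸ hx
    · exact (Finset.mem_singleton.mp h) ▸ hy
  · rw [hS, Finset.card_pair hxy]

private lemma path_getVert_inj {V : Type*} {G : SimpleGraph V} {u v : V} {p : G.Walk u v}
    (hp : p.IsPath) : ∀ i ≤ p.length, ∀ j ≤ p.length, p.getVert i = p.getVert j → i = j := by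
  induction p with
  | nil => intro i hi j hj _; simp at hi hj; omega
  | cons h q ih =>
    rw [Walk.cons_isPath_iff] at hp
    intro i hi j hj hij
    match i, j with
    | 0, 0 => rfl
    | 0, j+1 =>
      exact absurd (Walk.mem_support_iff_exists_getVert.mpr
        ⟨j, by simpa using hij.symm, by simpa using hj⟩) hp.2
    | i+1, 0 =>
      exact absurd (Walk.mem_support_iff_exists_getVert.mpr
        ⟨i, by simpa using hij, by simpa using hi⟩) hp.2
    | i+1, j+1 =>
      have := ih hp.1 i (by simpa using hi) j (by simpa using hj) (by simpa using hij)
      omega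

private lemma induced_not_adj {V : Type*} {G : SimpleGraph V} {u v : V} {p : G.Walk u v}
    (hp : IsInducedPath G p) {i j : ℕ} (hij : i + 2 ≤ j) (hj : j ≤ p.length) :
    ¬ G.Adj (p.getVert i) (p.getVert j) := by
  intro hadj
  have hmem1 : p.getVert i ∈ p.support :=
    Walk.mem_support_iff_exists_getVert.mpr ⟨i, rfl, by omega⟩
  have hmem2 : p.getVert j ∈ p.support :=
    Walk.mem_support_iff_exists_getVert.mpr ⟨j, rfl, hj⟩
  have h2 := hp.2 _ _ hmem1 hmem2 hadj
  rw [Walk.toSubgraph_adj_iff] at h2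
  obtain ⟨m, hm, hml⟩ := h2
  rw [Sym2.eq_iff] at hm
  have inj := path_getVert_inj hp.1
  rcases hm with ⟨h1, h2⟩ | ⟨h1, h2⟩
  · have e1 := inj m (by omega) i (by omega) h1
    have e2 := inj (m+1) (by omega) j hj h2
    omega
  · have e1 := inj m (by omega) j hj h1
    have e2 := inj (m+1) (by omega) i (by omega) h2
    omega

private lemma kneser_inter {n r : ℕ} {x y : {s : Finset (Fin n) // s.card = r}}
    (hxy : x ≠ y) (h : ¬ (kneser n r).Adj x y) : (x.1 ∩ y.1).Nonempty := by
  rw [Finset.nonempty_iff_ne_empty]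
  intro hemp
  exact h ⟨hxy, Finset.disjoint_iff_inter_eq_empty.mpr hemp⟩

private lemma key {n : ℕ} {a b c : Fin n} (hab : a ≠ b) (hac : a ≠ c) (hbc : b ≠ c)
    {u v w : {s : Finset (Fin n) // s.card = 2}}
    (hu : u.1 = {a, b}) (hv : v.1 = {a, c}) (hw : w.1 = {b, c}) :
    w ∉ monoInterval (kneser n 2) u v := by
  rintro ⟨p, hp, hws⟩
  obtain ⟨i, hgi, hik⟩ := Walk.mem_support_iff_exists_getVert.mp hws
  set k := p.length with hk
  have inj : ∀ x ≤ k, ∀ y ≤ k, p.getVert x = p.getVert y → x = y := path_getVert_inj hp.1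
  have hne : ∀ x y : ℕ, x + 2 ≤ y → y ≤ k → ((p.getVert x).1 ∩ (p.getVert y).1).Nonempty := by
    intro x y hxy hy
    refine kneser_inter ?_ (induced_not_adj hp hxy hy)
    intro heq
    have := inj x (by omega) y hy heq
    omega
  have hdisj : ∀ x : ℕ, x < k → Disjoint (p.getVert x).1 (p.getVert (x+1)).1 := by
    intro x hx
    exact (p.adj_getVert_succ hx).2
  have hg0 : p.getVert 0 = u := p.getVert_zero
  have hgk : p.getVert k = v := p.getVert_length
  -- i ≠ 0, i ≠ k
  have hi0 : i ≠ 0 := by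
    intro h; subst h; rw [hg0] at hgi
    have : a ∈ w.1 := by rw [← hgi, hu]; simp
    rw [hw] at this; simp at this; tauto
  have hikk : i ≠ k := by
    intro h; subst h; rw [hgk] at hgi
    have : a ∈ w.1 := by rw [← hgi, hv]; simp
    rw [hw] at this; simp at this; tauto
  -- i ≠ 1
  have hi1 : i ≠ 1 := by
    intro h; subst h
    have hd := hdisj 0 (by omega)
    rw [hg0, hgi] at hd
    have hb : b ∈ w.1 := by rw [hw]; simp
    exact Finset.disjoint_left.mp hd (by rw [hu]; simp) hb
  -- i ≠ k - 1
  have hik1 : i ≠ k - 1 := by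
    intro h
    have hd := hdisj (k-1) (by omega)
    have e1 : k - 1 + 1 = k := by omega
    rw [e1, hgk, ← h, hgi] at hd
    have hc : c ∈ w.1 := by rw [hw]; simp
    exact Finset.disjoint_left.mp hd hc (by rw [hv]; simp)
  -- i ≠ 2
  have hi2 : i ≠ 2 := by
    intro h; subst h
    have hd0 := hdisj 0 (by omega)
    rw [hg0] at hd0
    have hd1 := hdisj 1 (by omega)
    rw [hgi] at hd1
    obtain ⟨x, hx⟩ := hne 1 k (by omega) (le_refl k)
    rw [Finset.mem_inter, hgk, hv] at hx
    have hxa : x ≠ a := by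
      intro h'; subst h'
      exact Finset.disjoint_left.mp hd0 (by rw [hu]; simp) hx.1
    have hxc : x ≠ c := by
      intro h'; subst h'
      exact Finset.disjoint_left.mp hd1 hx.1 (by rw [hw]; simp)
    simp at hx; tauto
  -- i ≠ k - 2
  have hik2 : i ≠ k - 2 := by
    intro h
    have hdk := hdisj (k-1) (by omega)
    have e1 : k - 1 + 1 = k := by omega
    rw [e1, hgk] at hdk
    have hdk2 := hdisj (k-2) (by omega)
    have e2 : k - 2 + 1 = k - 1 := by omega
    rw [e2, ← h, hgi] at hdk2
    obtain ⟨x, hx⟩ := hne 0 (k-1) (by omega) (by omega)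
    rw [Finset.mem_inter, hg0, hu] at hx
    have hxa : x ≠ a := by
      intro h'; subst h'
      exact Finset.disjoint_left.mp hdk hx.2 (by rw [hv]; simp)
    have hxb : x ≠ b := by
      intro h'; subst h'
      exact Finset.disjoint_left.mp hdk2 (by rw [hw]; simp) hx.2
    simp at hx; tauto
  have hi3 : 3 ≤ i := by omega
  have hik3 : i + 3 ≤ k := by omega
  -- P = getVert (i-1) : contains a, not b, not c
  have hdP := hdisj (i-1) (by omega)
  have eP : i - 1 + 1 = i := by omega
  rw [eP, hgi] at hdP
  have hPb : b ∉ (p.getVert (i-1)).1 := fun h =>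
    Finset.disjoint_left.mp hdP h (by rw [hw]; simp)
  have hPc : c ∉ (p.getVert (i-1)).1 := fun h =>
    Finset.disjoint_left.mp hdP h (by rw [hw]; simp)
  have hPa : a ∈ (p.getVert (i-1)).1 := by
    obtain ⟨x, hx⟩ := hne 0 (i-1) (by omega) (by omega)
    rw [Finset.mem_inter, hg0, hu] at hx
    have := hx.1
    simp at this
    rcases this with h | h
    · rw [← h]; exact hx.2
    · exact absurd (h ▸ hx.2) hPb
  -- P' = getVert (i+1) : contains a, not b, not c
  have hdP' := hdisj i (by omega)
  rw [hgi] at hdP'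
  have hP'b : b ∉ (p.getVert (i+1)).1 := fun h =>
    Finset.disjoint_right.mp hdP' h (by rw [hw]; simp)
  have hP'c : c ∉ (p.getVert (i+1)).1 := fun h =>
    Finset.disjoint_right.mp hdP' h (by rw [hw]; simp)
  have hP'a : a ∈ (p.getVert (i+1)).1 := by
    obtain ⟨x, hx⟩ := hne (i+1) k (by omega) (le_refl k)
    rw [Finset.mem_inter, hgk, hv] at hx
    have := hx.2
    simp at this
    rcases this with h | h
    · rw [← h]; exact hx.1
    · exact absurd (h ▸ hx.1) hP'c
  -- Q = getVert (i+2) : not a, contains b, not c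
  have hdQ := hdisj (i+1) (by omega)
  have hQa : a ∉ (p.getVert (i+2)).1 := fun h =>
    Finset.disjoint_left.mp hdQ hP'a h
  have hQb : b ∈ (p.getVert (i+2)).1 := by
    obtain ⟨x, hx⟩ := hne 0 (i+2) (by omega) (by omega)
    rw [Finset.mem_inter, hg0, hu] at hx
    have := hx.1
    simp at this
    rcases this with h | h
    · exact absurd (h ▸ hx.2) hQa
    · rw [← h]; exact hx.2
  have hQc : c ∉ (p.getVert (i+2)).1 := by
    intro h
    have hQeq : (p.getVert (i+2)).1 = {b, c} := pair_eq_of (p.getVert (i+2)).2 hQb h hbc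
    have : p.getVert (i+2) = p.getVert i := by
      apply Subtype.ext; rw [hQeq, hgi, hw]
    have := inj (i+2) (by omega) i (by omega) this
    omega
  -- e ∈ P ∩ Q
  obtain ⟨e, he⟩ := hne (i-1) (i+2) (by omega) (by omega)
  rw [Finset.mem_inter] at he
  have heb : e ≠ b := fun h => hPb (h ▸ he.1)
  have hQeq : (p.getVert (i+2)).1 = {b, e} := pair_eq_of (p.getVert (i+2)).2 hQb he.2 (Ne.symm heb)
  -- R = getVert (i-2) : disjoint from P
  have hdR := hdisj (i-2) (by omega)
  have eR : i - 2 + 1 = i - 1 := by omega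
  rw [eR] at hdR
  have hRa : a ∉ (p.getVert (i-2)).1 := fun h => Finset.disjoint_left.mp hdR h hPa
  have hRe : e ∉ (p.getVert (i-2)).1 := fun h => Finset.disjoint_left.mp hdR h he.1
  -- b ∈ R
  have hRb : b ∈ (p.getVert (i-2)).1 := by
    obtain ⟨f, hf⟩ := hne (i-2) (i+2) (by omega) (by omega)
    rw [Finset.mem_inter, hQeq] at hf
    have := hf.2
    simp at this
    rcases this with h | h
    · rw [← h]; exact hf.1
    · exact absurd (h ▸ hf.1) hRe
  -- c ∈ R
  have hRc : c ∈ (p.getVert (i-2)).1 := by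
    obtain ⟨f, hf⟩ := hne (i-2) k (by omega) (le_refl k)
    rw [Finset.mem_inter, hgk, hv] at hf
    have := hf.2
    simp at this
    rcases this with h | h
    · exact absurd (h ▸ hf.1) hRa
    · rw [← h]; exact hf.1
  have hReq : (p.getVert (i-2)).1 = {b, c} := pair_eq_of (p.getVert (i-2)).2 hRb hRc hbc
  have : p.getVert (i-2) = p.getVert i := by
    apply Subtype.ext; rw [hReq, hgi, hw]
  have := inj (i-2) (by omega) i (by omega) this
  omega

private lemma mono_self {V : Type*} {G : SimpleGraph V} {z w : V}
    (h : w ∈ monoInterval G z z) : w = z := by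
  obtain ⟨p, hp, hws⟩ := h
  rw [(Walk.isPath_iff_eq_nil (p := p)).mp hp.1] at hws
  simpa using hws

private lemma key_adj {n : ℕ} {x y w : {s : Finset (Fin n) // s.card = 2}}
    (hadj : (kneser n 2).Adj x y)
    (hwx : (w.1 ∩ x.1).Nonempty) (hwy : (w.1 ∩ y.1).Nonempty)
    (hwx' : w ≠ x) (hwy' : w ≠ y) : w ∉ monoInterval (kneser n 2) x y := by
  rintro ⟨p, hp, hws⟩
  obtain ⟨i, hgi, hik⟩ := Walk.mem_support_iff_exists_getVert.mp hws
  set k := p.length with hk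
  have inj : ∀ a ≤ k, ∀ b ≤ k, p.getVert a = p.getVert b → a = b := path_getVert_inj hp.1
  have hdisj : ∀ a : ℕ, a < k → Disjoint (p.getVert a).1 (p.getVert (a+1)).1 := by
    intro a ha; exact (p.adj_getVert_succ ha).2
  have hg0 : p.getVert 0 = x := p.getVert_zero
  have hgk : p.getVert k = y := p.getVert_length
  have hi0 : i ≠ 0 := by intro h; subst h; rw [hg0] at hgi; exact hwx' hgi.symm
  have hikk : i ≠ k := by intro h; subst h; rw [hgk] at hgi; exact hwy' hgi.symm
  have hi1 : i ≠ 1 := by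
    intro h; subst h
    have hd := hdisj 0 (by omega)
    rw [hg0, hgi] at hd
    obtain ⟨t, ht⟩ := hwx
    rw [Finset.mem_inter] at ht
    exact Finset.disjoint_left.mp hd ht.2 ht.1
  have hik1 : i ≠ k - 1 := by
    intro h
    have hd := hdisj (k-1) (by omega)
    have e1 : k - 1 + 1 = k := by omega
    rw [e1, hgk, ← h, hgi] at hd
    obtain ⟨t, ht⟩ := hwy
    rw [Finset.mem_inter] at ht
    exact Finset.disjoint_left.mp hd ht.1 ht.2
  have hnadj := induced_not_adj hp (i := 0) (j := k) (by omega) (le_refl k)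
  rw [hg0, hgk] at hnadj
  exact hnadj hadj

theorem stmt2 (n : ℕ) (hn : 5 ≤ n) :
    (∀ x y : {s : Finset (Fin n) // s.card = 2},
        ¬ IsMonophonicSet (kneser n 2) {x, y}) ∧
    (∀ u v w : {s : Finset (Fin n) // s.card = 2},
        u.1 = {⟨0, by omega⟩, ⟨1, by omega⟩} →
        v.1 = {⟨0, by omega⟩, ⟨2, by omega⟩} →
        w.1 = {⟨1, by omega⟩, ⟨2, by omega⟩} →
        w ∉ monoInterval (kneser n 2) u v) := by
  constructor
  · intro x y hmono
    by_cases hxy : x = y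
    · -- find a vertex different from x
      subst hxy
      obtain ⟨a, ha⟩ : x.1.Nonempty := Finset.card_pos.mp (by rw [x.2]; omega)
      obtain ⟨d, hd⟩ : (x.1ᶜ).Nonempty := by
        rw [← Finset.card_pos, Finset.card_compl, x.2, Fintype.card_fin]; omega
      rw [Finset.mem_compl] at hd
      have had : a ≠ d := fun h => hd (h ▸ ha)
      set w' : {s : Finset (Fin n) // s.card = 2} := ⟨{a, d}, Finset.card_pair had⟩ with hw'
      obtain ⟨x', hx', y', hy', hm⟩ := hmono w'
      simp only [Set.mem_insert_iff, Set.mem_singleton_iff, or_self] at hx' hy'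
      subst hx'; subst hy'
      have := mono_self hm
      apply hd
      rw [← this]
      simp [hw']
    · by_cases hdj : Disjoint x.1 y.1
      · -- adjacent case
        obtain ⟨a, ha⟩ : x.1.Nonempty := Finset.card_pos.mp (by rw [x.2]; omega)
        obtain ⟨c, hc⟩ : y.1.Nonempty := Finset.card_pos.mp (by rw [y.2]; omega)
        have hac : a ≠ c := fun h => Finset.disjoint_left.mp hdj ha (h ▸ hc)
        set w' : {s : Finset (Fin n) // s.card = 2} := ⟨{a, c}, Finset.card_pair hac⟩ with hw'
        have hwx' : w' ≠ x := by
          intro h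
          have : c ∈ x.1 := by rw [← h]; simp [hw']
          exact Finset.disjoint_right.mp hdj hc this
        have hwy' : w' ≠ y := by
          intro h
          have : a ∈ y.1 := by rw [← h]; simp [hw']
          exact Finset.disjoint_left.mp hdj ha this
        have hwx : (w'.1 ∩ x.1).Nonempty := ⟨a, Finset.mem_inter.mpr ⟨by simp [hw'], ha⟩⟩
        have hwy : (w'.1 ∩ y.1).Nonempty := ⟨c, Finset.mem_inter.mpr ⟨by simp [hw'], hc⟩⟩
        have hadj : (kneser n 2).Adj x y := ⟨hxy, hdj⟩
        obtain ⟨x', hx', y', hy', hm⟩ := hmono w'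
        simp only [Set.mem_insert_iff, Set.mem_singleton_iff] at hx' hy'
        rcases hx' with rfl | rfl <;> rcases hy' with rfl | rfl
        · exact hwx' (mono_self hm)
        · exact key_adj hadj hwx hwy hwx' hwy' hm
        · exact key_adj hadj.symm hwy hwx hwy' hwx' hm
        · exact hwy' (mono_self hm)
      · -- intersecting case
        obtain ⟨a, ha⟩ := Finset.not_disjoint_iff.mp hdj
        obtain ⟨b, hb⟩ : ∃ b, x.1.erase a = {b} := Finset.card_eq_one.mp (by
          rw [Finset.card_erase_of_mem ha.1, x.2])
        obtain ⟨c, hc⟩ : ∃ c, y.1.erase a = {c} := Finset.card_eq_one.mp (by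
          rw [Finset.card_erase_of_mem ha.2, y.2])
        have hxab : x.1 = {a, b} := by
          rw [← Finset.insert_erase ha.1, hb]
        have hyac : y.1 = {a, c} := by
          rw [← Finset.insert_erase ha.2, hc]
        have hab : a ≠ b := by
          intro h
          have : b ∈ x.1.erase a := hb ▸ Finset.mem_singleton_self b
          exact (Finset.mem_erase.mp this).1 h.symm
        have hac : a ≠ c := by
          intro h
          have : c ∈ y.1.erase a := hc ▸ Finset.mem_singleton_self c
          exact (Finset.mem_erase.mp this).1 h.symm
        have hbc : b ≠ c := by
          intro h
          apply hxy
          apply Subtype.ext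
          rw [hxab, hyac, h]
        set w' : {s : Finset (Fin n) // s.card = 2} := ⟨{b, c}, Finset.card_pair hbc⟩ with hw'
        have hwx' : w' ≠ x := by
          intro h
          have : c ∈ x.1 := by rw [← h]; simp [hw']
          rw [hxab] at this; simp at this
          rcases this with h' | h' 
          · exact hac h'.symm
          · exact hbc h'.symm
        have hwy' : w' ≠ y := by
          intro h
          have : b ∈ y.1 := by rw [← h]; simp [hw']
          rw [hyac] at this; simp at this
          rcases this with h' | h'
          · exact hab h'.symm
          · exact hbc h'
        obtain ⟨x', hx', y', hy', hm⟩ := hmono w'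
        simp only [Set.mem_insert_iff, Set.mem_singleton_iff] at hx' hy'
        rcases hx' with rfl | rfl <;> rcases hy' with rfl | rfl
        · exact hwx' (mono_self hm)
        · exact key hab hac hbc hxab hyac rfl hm
        · exact key hac hab (Ne.symm hbc) hyac hxab (by simp [hw', Finset.pair_comm]) hm
        · exact hwy' (mono_self hm)
  · intro u v w hu hv hw
    have h01 : (⟨0, by omega⟩ : Fin n) ≠ ⟨1, by omega⟩ := by
      intro h; simpa using congrArg Fin.val h
    have h02 : (⟨0, by omega⟩ : Fin n) ≠ ⟨2, by omega⟩ := by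
      intro h; simpa using congrArg Fin.val h
    have h12 : (⟨1, by omega⟩ : Fin n) ≠ ⟨2, by omega⟩ := by
      intro h; simpa using congrArg Fin.val h
    exact key h01 h02 h12 hu hv hw
end

section
/- Let a,b be distinct vertices of the odd Kneser graph K(2r+1,r) with |a ∩ b| = t ≥ 1. Write C = a∩b, A = a\b = {a_1,...,a_{r−t}}, B = b\a = {b_1,...,b_{r−t}}, D = [2r+1]\(a∪b). For i ∈ [r−t] let x_{2i−1} = {a_1,...,a_{i−1}} ∪ {b_{i+1},...,b_{r−t}} ∪ D, and for i ∈ {0}∪[r−t] let x_{2i} = {b_1,...,b_i} ∪ {a_{i+1},...,a_{r−t}} ∪ C. Then x_0 = a, x_1, ..., x_{2(r−t)} = b is an induced a,b-path of length 2(r−t) in K(2r+1,r). -/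
open SimpleGraph

variable {V : Type*}

section WalkOfFnAux
variable {G : SimpleGraph V}

private def myWalkOfFn : ∀ (n : ℕ) (f : ℕ → V), (∀ i < n, G.Adj (f i) (f (i+1))) → G.Walk (f 0) (f n)
  | 0, _, _ => .nil
  | n+1, f, h =>
    .cons (h 0 (Nat.succ_pos n))
      (myWalkOfFn n (fun i => f (i+1)) (fun i hi => h (i+1) (Nat.succ_lt_succ hi)))

private lemma myWalkOfFn_length (n : ℕ) (f : ℕ → V) (h : ∀ i < n, G.Adj (f i) (f (i+1))) :
    (myWalkOfFn n f h).length = n := by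
  induction n generalizing f with
  | zero => rfl
  | succ n ih => simp [myWalkOfFn, ih]

private lemma myWalkOfFn_support (n : ℕ) (f : ℕ → V) (h : ∀ i < n, G.Adj (f i) (f (i+1))) :
    (myWalkOfFn n f h).support = (List.range (n+1)).map f := by
  induction n generalizing f with
  | zero => rfl
  | succ n ih =>
    rw [myWalkOfFn, Walk.support_cons, ih]
    rw [List.range_succ_eq_map (n := n+1), List.map_cons, List.map_map]
    simp [Function.comp_def]

private lemma myWalkOfFn_getVert (n : ℕ) (f : ℕ → V) (h : ∀ i < n, G.Adj (f i) (f (i+1))) (i : ℕ) :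
    (myWalkOfFn n f h).getVert i = f (min i n) := by
  induction n generalizing f i with
  | zero => simp [myWalkOfFn, Walk.getVert]
  | succ n ih =>
    cases i with
    | zero => simp [myWalkOfFn]
    | succ i =>
      rw [myWalkOfFn, Walk.getVert_cons_succ, ih]
      congr 1
      omega

private lemma myToSubgraph_copy {u v u' v' : V} (p : G.Walk u v) (hu : u = u') (hv : v = v') :
    (p.copy hu hv).toSubgraph = p.toSubgraph := by subst hu hv; rfl

end WalkOfFnAux

theorem stmt3 (r t : ℕ) (ht : 1 ≤ t)
    (a b : {s : Finset (Fin (2 * r + 1)) // s.card = r})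
    (hab : a ≠ b) (hcap : (a.1 ∩ b.1).card = t)
    (aSeq bSeq : ℕ → Fin (2 * r + 1))
    (haInj : ∀ i < r - t, ∀ j < r - t, aSeq i = aSeq j → i = j)
    (hbInj : ∀ i < r - t, ∀ j < r - t, bSeq i = bSeq j → i = j)
    (haIm : (Finset.range (r - t)).image aSeq = a.1 \ b.1)
    (hbIm : (Finset.range (r - t)).image bSeq = b.1 \ a.1)
    (x : ℕ → Finset (Fin (2 * r + 1)))
    (hx : ∀ k, x k = if Even k
        then (Finset.range (k / 2)).image bSeq ∪
          (Finset.Ico (k / 2) (r - t)).image aSeq ∪ (a.1 ∩ b.1)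
        else (Finset.range ((k - 1) / 2)).image aSeq ∪
          (Finset.Ico ((k + 1) / 2) (r - t)).image bSeq ∪
          (Finset.univ \ (a.1 ∪ b.1))) :
    ∃ p : (kneser (2 * r + 1) r).Walk a b,
      IsInducedPath (kneser (2 * r + 1) r) p ∧ p.length = 2 * (r - t) ∧
      p.support.map Subtype.val = (List.range (2 * (r - t) + 1)).map x := by
  set m := r - t with hmdef
  have htr : t ≤ r := by
    have h := Finset.card_le_card (Finset.inter_subset_left : a.1 ∩ b.1 ⊆ a.1)
    rw [hcap, a.2] at h
    exact h
  have hACard : (a.1 \ b.1).card = m := by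
    have h := Finset.card_inter_add_card_sdiff a.1 b.1
    rw [hcap, a.2] at h; omega
  have hBCard : (b.1 \ a.1).card = m := by
    have h := Finset.card_inter_add_card_sdiff b.1 a.1
    rw [Finset.inter_comm, hcap, b.2] at h; omega
  have hUcard : (a.1 ∪ b.1).card = 2 * r - t := by
    have h := Finset.card_union_add_card_inter a.1 b.1
    rw [hcap, a.2, b.2] at h; omega
  have hDcard : (Finset.univ \ (a.1 ∪ b.1)).card = t + 1 := by
    rw [Finset.card_sdiff_of_subset (Finset.subset_univ _), hUcard]
    have h : (Finset.univ : Finset (Fin (2*r+1))).card = 2*r+1 := by simp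
    omega
  have haSub : ∀ n ≤ m, (Finset.range n).image aSeq ⊆ a.1 \ b.1 := by
    intro n hn
    rw [← haIm]
    exact Finset.image_subset_image (Finset.range_subset_range.2 hn)
  have hbSub : ∀ n ≤ m, (Finset.range n).image bSeq ⊆ b.1 \ a.1 := by
    intro n hn
    rw [← hbIm]
    exact Finset.image_subset_image (Finset.range_subset_range.2 hn)
  have haSubIco : ∀ l u, u ≤ m → (Finset.Ico l u).image aSeq ⊆ a.1 \ b.1 := by
    intro l u hu
    rw [← haIm]
    exact Finset.image_subset_image fun i hi =>
      Finset.mem_range.2 (lt_of_lt_of_le (Finset.mem_Ico.1 hi).2 hu)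
  have hbSubIco : ∀ l u, u ≤ m → (Finset.Ico l u).image bSeq ⊆ b.1 \ a.1 := by
    intro l u hu
    rw [← hbIm]
    exact Finset.image_subset_image fun i hi =>
      Finset.mem_range.2 (lt_of_lt_of_le (Finset.mem_Ico.1 hi).2 hu)
  have haMemR : ∀ i < m, ∀ n ≤ m, (aSeq i ∈ (Finset.range n).image aSeq ↔ i < n) := by
    intro i hi n hn
    constructor
    · intro h
      obtain ⟨j, hj, hji⟩ := Finset.mem_image.1 h
      have hjn := Finset.mem_range.1 hj
      have := haInj j (by omega) i hi hji
      omega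
    · intro h
      exact Finset.mem_image_of_mem _ (Finset.mem_range.2 h)
  have hbMemR : ∀ i < m, ∀ n ≤ m, (bSeq i ∈ (Finset.range n).image bSeq ↔ i < n) := by
    intro i hi n hn
    constructor
    · intro h
      obtain ⟨j, hj, hji⟩ := Finset.mem_image.1 h
      have hjn := Finset.mem_range.1 hj
      have := hbInj j (by omega) i hi hji
      omega
    · intro h
      exact Finset.mem_image_of_mem _ (Finset.mem_range.2 h)
  have haMemIco : ∀ i < m, ∀ l u, u ≤ m →
      (aSeq i ∈ (Finset.Ico l u).image aSeq ↔ l ≤ i ∧ i < u) := by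
    intro i hi l u hu
    constructor
    · intro h
      obtain ⟨j, hj, hji⟩ := Finset.mem_image.1 h
      obtain ⟨hj1, hj2⟩ := Finset.mem_Ico.1 hj
      have := haInj j (by omega) i hi hji
      omega
    · intro h
      exact Finset.mem_image_of_mem _ (Finset.mem_Ico.2 h)
  have hbMemIco : ∀ i < m, ∀ l u, u ≤ m →
      (bSeq i ∈ (Finset.Ico l u).image bSeq ↔ l ≤ i ∧ i < u) := by
    intro i hi l u hu
    constructor
    · intro h
      obtain ⟨j, hj, hji⟩ := Finset.mem_image.1 h
      obtain ⟨hj1, hj2⟩ := Finset.mem_Ico.1 hj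
      have := hbInj j (by omega) i hi hji
      omega
    · intro h
      exact Finset.mem_image_of_mem _ (Finset.mem_Ico.2 h)
  have haA : ∀ i < m, aSeq i ∈ a.1 ∧ aSeq i ∉ b.1 := by
    intro i hi
    exact Finset.mem_sdiff.1 (haSub m le_rfl ((haMemR i hi m le_rfl).2 hi))
  have hbB : ∀ i < m, bSeq i ∈ b.1 ∧ bSeq i ∉ a.1 := by
    intro i hi
    exact Finset.mem_sdiff.1 (hbSub m le_rfl ((hbMemR i hi m le_rfl).2 hi))
  -- membership characterizations
  have hxA : ∀ i < m, ∀ k ≤ 2*m,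
      (aSeq i ∈ x k ↔ (k % 2 = 0 ∧ k/2 ≤ i) ∨ (k % 2 = 1 ∧ i < (k-1)/2)) := by
    intro i hi k hk
    obtain ⟨hiA, hiB⟩ := haA i hi
    rw [hx k]
    by_cases he : Even k
    · have h2 : k % 2 = 0 := Nat.even_iff.1 he
      rw [if_pos he]
      simp only [Finset.mem_union]
      have hnB : aSeq i ∉ (Finset.range (k/2)).image bSeq := fun h =>
        hiB (Finset.mem_sdiff.1 (hbSub (k/2) (by omega) h)).1
      have hnC : aSeq i ∉ a.1 ∩ b.1 := fun h => hiB (Finset.mem_inter.1 h).2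
      rw [haMemIco i hi (k/2) m le_rfl]
      constructor
      · rintro ((h | h) | h)
        · exact absurd h hnB
        · exact Or.inl ⟨h2, h.1⟩
        · exact absurd h hnC
      · rintro (⟨_, h⟩ | ⟨h', _⟩)
        · exact Or.inl (Or.inr ⟨h, hi⟩)
        · omega
    · have h2 : k % 2 = 1 := Nat.not_even_iff.1 he
      rw [if_neg he]
      simp only [Finset.mem_union]
      have hnB : aSeq i ∉ (Finset.Ico ((k+1)/2) m).image bSeq := fun h =>
        hiB (Finset.mem_sdiff.1 (hbSubIco _ m le_rfl h)).1
      have hnD : aSeq i ∉ Finset.univ \ (a.1 ∪ b.1) := fun h =>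
        (Finset.mem_sdiff.1 h).2 (Finset.mem_union_left _ hiA)
      rw [haMemR i hi ((k-1)/2) (by omega)]
      constructor
      · rintro ((h | h) | h)
        · exact Or.inr ⟨h2, h⟩
        · exact absurd h hnB
        · exact absurd h hnD
      · rintro (⟨h', _⟩ | ⟨_, h⟩)
        · omega
        · exact Or.inl (Or.inl h)
  have hxB : ∀ i < m, ∀ k ≤ 2*m,
      (bSeq i ∈ x k ↔ (k % 2 = 0 ∧ i < k/2) ∨ (k % 2 = 1 ∧ (k+1)/2 ≤ i)) := by
    intro i hi k hk
    obtain ⟨hiB, hiA⟩ := hbB i hi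
    rw [hx k]
    by_cases he : Even k
    · have h2 : k % 2 = 0 := Nat.even_iff.1 he
      rw [if_pos he]
      simp only [Finset.mem_union]
      have hnA' : bSeq i ∉ (Finset.Ico (k/2) m).image aSeq := fun h =>
        (Finset.mem_sdiff.1 (haSubIco _ m le_rfl h)).2 hiB
      have hnC : bSeq i ∉ a.1 ∩ b.1 := fun h => hiA (Finset.mem_inter.1 h).1
      rw [hbMemR i hi (k/2) (by omega)]
      constructor
      · rintro ((h | h) | h)
        · exact Or.inl ⟨h2, h⟩
        · exact absurd h hnA'
        · exact absurd h hnC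
      · rintro (⟨_, h⟩ | ⟨h', _⟩)
        · exact Or.inl (Or.inl h)
        · omega
    · have h2 : k % 2 = 1 := Nat.not_even_iff.1 he
      rw [if_neg he]
      simp only [Finset.mem_union]
      have hnA : bSeq i ∉ (Finset.range ((k-1)/2)).image aSeq := fun h =>
        (Finset.mem_sdiff.1 (haSub _ (by omega) h)).2 hiB
      have hnD : bSeq i ∉ Finset.univ \ (a.1 ∪ b.1) := fun h =>
        (Finset.mem_sdiff.1 h).2 (Finset.mem_union_right _ hiB)
      rw [hbMemIco i hi ((k+1)/2) m le_rfl]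
      constructor
      · rintro ((h | h) | h)
        · exact absurd h hnA
        · exact Or.inr ⟨h2, h.1⟩
        · exact absurd h hnD
      · rintro (⟨h', _⟩ | ⟨_, h⟩)
        · omega
        · exact Or.inl (Or.inr ⟨h, hi⟩)
  have hxC : ∀ y ∈ a.1 ∩ b.1, ∀ k ≤ 2*m, (y ∈ x k ↔ k % 2 = 0) := by
    intro y hy k hk
    obtain ⟨hyA, hyB⟩ := Finset.mem_inter.1 hy
    rw [hx k]
    by_cases he : Even k
    · have h2 : k % 2 = 0 := Nat.even_iff.1 he
      rw [if_pos he]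
      simp only [Finset.mem_union]
      exact ⟨fun _ => h2, fun _ => Or.inr hy⟩
    · have h2 : k % 2 = 1 := Nat.not_even_iff.1 he
      rw [if_neg he]
      simp only [Finset.mem_union]
      constructor
      · rintro ((h | h) | h)
        · exact absurd hyB (Finset.mem_sdiff.1 (haSub _ (by omega) h)).2
        · exact absurd hyA (Finset.mem_sdiff.1 (hbSubIco _ m le_rfl h)).2
        · exact absurd (Finset.mem_union_left _ hyA) (Finset.mem_sdiff.1 h).2
      · intro h
        exact absurd h (by omega)
  have hxD : ∀ y ∈ Finset.univ \ (a.1 ∪ b.1), ∀ k ≤ 2*m, (y ∈ x k ↔ k % 2 = 1) := by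
    intro y hy k hk
    have hyn := (Finset.mem_sdiff.1 hy).2
    have hyA : y ∉ a.1 := fun h => hyn (Finset.mem_union_left _ h)
    have hyB : y ∉ b.1 := fun h => hyn (Finset.mem_union_right _ h)
    rw [hx k]
    by_cases he : Even k
    · have h2 : k % 2 = 0 := Nat.even_iff.1 he
      rw [if_pos he]
      simp only [Finset.mem_union]
      constructor
      · rintro ((h | h) | h)
        · exact absurd (Finset.mem_sdiff.1 (hbSub _ (by omega) h)).1 hyB
        · exact absurd (Finset.mem_sdiff.1 (haSubIco _ m le_rfl h)).1 hyA
        · exact absurd (Finset.mem_inter.1 h).1 hyA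
      · intro h
        exact absurd h (by omega)
    · have h2 : k % 2 = 1 := Nat.not_even_iff.1 he
      rw [if_neg he]
      simp only [Finset.mem_union]
      exact ⟨fun _ => h2, fun _ => Or.inr hy⟩
  -- cardinality
  have hxcard : ∀ k ≤ 2*m, (x k).card = r := by
    intro k hk
    rw [hx k]
    by_cases he : Even k
    · have h2 : k % 2 = 0 := Nat.even_iff.1 he
      rw [if_pos he]
      have hinjb : Set.InjOn bSeq (Finset.range (k/2)) := by
        intro i hi j hj hij
        simp only [Finset.coe_range, Set.mem_Iio] at hi hj
        exact hbInj i (by omega) j (by omega) hij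
      have hinja : Set.InjOn aSeq (Finset.Ico (k/2) m) := by
        intro i hi j hj hij
        simp only [Finset.coe_Ico, Set.mem_Ico] at hi hj
        exact haInj i (by omega) j (by omega) hij
      have hd1 : Disjoint ((Finset.range (k/2)).image bSeq) ((Finset.Ico (k/2) m).image aSeq) := by
        rw [Finset.disjoint_left]
        intro y hy hy'
        exact (Finset.mem_sdiff.1 (hbSub _ (by omega) hy)).2
          (Finset.mem_sdiff.1 (haSubIco _ _ le_rfl hy')).1
      have hd2 : Disjoint ((Finset.range (k/2)).image bSeq ∪ (Finset.Ico (k/2) m).image aSeq)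
          (a.1 ∩ b.1) := by
        rw [Finset.disjoint_left]
        intro y hy hy'
        obtain ⟨hyA, hyB⟩ := Finset.mem_inter.1 hy'
        rcases Finset.mem_union.1 hy with h | h
        · exact (Finset.mem_sdiff.1 (hbSub _ (by omega) h)).2 hyA
        · exact (Finset.mem_sdiff.1 (haSubIco _ _ le_rfl h)).2 hyB
      rw [Finset.card_union_of_disjoint hd2, Finset.card_union_of_disjoint hd1,
        Finset.card_image_of_injOn hinjb, Finset.card_image_of_injOn hinja,
        Finset.card_range, Nat.card_Ico, hcap]
      omega
    · have h2 : k % 2 = 1 := Nat.not_even_iff.1 he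
      rw [if_neg he]
      have hinja : Set.InjOn aSeq (Finset.range ((k-1)/2)) := by
        intro i hi j hj hij
        simp only [Finset.coe_range, Set.mem_Iio] at hi hj
        exact haInj i (by omega) j (by omega) hij
      have hinjb : Set.InjOn bSeq (Finset.Ico ((k+1)/2) m) := by
        intro i hi j hj hij
        simp only [Finset.coe_Ico, Set.mem_Ico] at hi hj
        exact hbInj i (by omega) j (by omega) hij
      have hd1 : Disjoint ((Finset.range ((k-1)/2)).image aSeq)
          ((Finset.Ico ((k+1)/2) m).image bSeq) := by
        rw [Finset.disjoint_left]
        intro y hy hy'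
        exact (Finset.mem_sdiff.1 (haSub _ (by omega) hy)).2
          (Finset.mem_sdiff.1 (hbSubIco _ _ le_rfl hy')).1
      have hd2 : Disjoint ((Finset.range ((k-1)/2)).image aSeq ∪
          (Finset.Ico ((k+1)/2) m).image bSeq) (Finset.univ \ (a.1 ∪ b.1)) := by
        rw [Finset.disjoint_left]
        intro y hy hy'
        have hyn := (Finset.mem_sdiff.1 hy').2
        rcases Finset.mem_union.1 hy with h | h
        · exact hyn (Finset.mem_union_left _ (Finset.mem_sdiff.1 (haSub _ (by omega) h)).1)
        · exact hyn (Finset.mem_union_right _ (Finset.mem_sdiff.1 (hbSubIco _ _ le_rfl h)).1)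
      rw [Finset.card_union_of_disjoint hd2, Finset.card_union_of_disjoint hd1,
        Finset.card_image_of_injOn hinja, Finset.card_image_of_injOn hinjb,
        Finset.card_range, Nat.card_Ico, hDcard]
      omega
  -- endpoints
  have hx0 : x 0 = a.1 := by
    rw [hx 0, if_pos (by decide : Even 0)]
    simp only [Nat.zero_div, Finset.range_zero, Finset.image_empty, Finset.empty_union]
    rw [← Finset.range_eq_Ico, haIm, Finset.sdiff_union_inter]
  have hx2m : x (2*m) = b.1 := by
    rw [hx (2*m), if_pos (even_two_mul m)]
    have h1 : 2*m/2 = m := by omega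
    rw [h1, Finset.Ico_self, Finset.image_empty, Finset.union_empty, hbIm,
      Finset.inter_comm, Finset.sdiff_union_inter]
  -- consecutive disjointness
  have hxdisj : ∀ k < 2*m, Disjoint (x k) (x (k+1)) := by
    intro k hk
    rw [Finset.disjoint_left]
    intro y hy hy'
    by_cases h1 : y ∈ a.1 <;> by_cases h2 : y ∈ b.1
    · have hc := hxC y (Finset.mem_inter.2 ⟨h1, h2⟩)
      have e1 := (hc k (by omega)).1 hy
      have e2 := (hc (k+1) (by omega)).1 hy'
      omega
    · have hyA : y ∈ (Finset.range m).image aSeq := by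
        rw [haIm]; exact Finset.mem_sdiff.2 ⟨h1, h2⟩
      obtain ⟨i, hi, rfl⟩ := Finset.mem_image.1 hyA
      have hi' := Finset.mem_range.1 hi
      have e1 := (hxA i hi' k (by omega)).1 hy
      have e2 := (hxA i hi' (k+1) (by omega)).1 hy'
      omega
    · have hyB : y ∈ (Finset.range m).image bSeq := by
        rw [hbIm]; exact Finset.mem_sdiff.2 ⟨h2, h1⟩
      obtain ⟨i, hi, rfl⟩ := Finset.mem_image.1 hyB
      have hi' := Finset.mem_range.1 hi
      have e1 := (hxB i hi' k (by omega)).1 hy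
      have e2 := (hxB i hi' (k+1) (by omega)).1 hy'
      omega
    · have hyD : y ∈ Finset.univ \ (a.1 ∪ b.1) := by
        simp only [Finset.mem_sdiff, Finset.mem_univ, Finset.mem_union, true_and]
        tauto
      have e1 := (hxD y hyD k (by omega)).1 hy
      have e2 := (hxD y hyD (k+1) (by omega)).1 hy'
      omega
  have hCne : (a.1 ∩ b.1).Nonempty := Finset.card_pos.1 (by rw [hcap]; omega)
  have hDne : (Finset.univ \ (a.1 ∪ b.1)).Nonempty := Finset.card_pos.1 (by rw [hDcard]; omega)
  -- far apart vertices intersect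
  have hxfar : ∀ k l, k ≤ 2*m → l ≤ 2*m → k + 2 ≤ l → ¬ Disjoint (x k) (x l) := by
    intro k l hk hl hkl hd
    rw [Finset.disjoint_left] at hd
    rcases Nat.even_or_odd k with hek | hok <;> rcases Nat.even_or_odd l with hel | hol
    · obtain ⟨y, hy⟩ := hCne
      exact hd ((hxC y hy k hk).2 (Nat.even_iff.1 hek)) ((hxC y hy l hl).2 (Nat.even_iff.1 hel))
    · have h2k := Nat.even_iff.1 hek
      have h2l := Nat.odd_iff.1 hol
      have him : k/2 < m := by omega
      exact hd ((hxA _ him k hk).2 (Or.inl ⟨h2k, le_rfl⟩))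
        ((hxA _ him l hl).2 (Or.inr ⟨h2l, by omega⟩))
    · have h2k := Nat.odd_iff.1 hok
      have h2l := Nat.even_iff.1 hel
      have him : (k+1)/2 < m := by omega
      exact hd ((hxB _ him k hk).2 (Or.inr ⟨h2k, le_rfl⟩))
        ((hxB _ him l hl).2 (Or.inl ⟨h2l, by omega⟩))
    · obtain ⟨y, hy⟩ := hDne
      exact hd ((hxD y hy k hk).2 (Nat.odd_iff.1 hok)) ((hxD y hy l hl).2 (Nat.odd_iff.1 hol))
  -- injectivity
  have hxlt : ∀ k l, k ≤ 2*m → l ≤ 2*m → k < l → x k ≠ x l := by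
    intro k l hk hl hkl heq
    rcases Nat.even_or_odd k with hek | hok <;> rcases Nat.even_or_odd l with hel | hol
    · have h2k := Nat.even_iff.1 hek
      have h2l := Nat.even_iff.1 hel
      have him : k/2 < m := by omega
      have h1 : bSeq (k/2) ∈ x l := (hxB _ him l hl).2 (Or.inl ⟨h2l, by omega⟩)
      have h3 : bSeq (k/2) ∉ x k := fun h => by
        have := (hxB _ him k hk).1 h
        omega
      exact h3 (by rw [heq]; exact h1)
    · obtain ⟨y, hy⟩ := hCne
      have h1 : y ∈ x k := (hxC y hy k hk).2 (Nat.even_iff.1 hek)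
      have h3 : y ∉ x l := fun h => by
        have := (hxC y hy l hl).1 h
        have := Nat.odd_iff.1 hol
        omega
      exact h3 (by rw [← heq]; exact h1)
    · obtain ⟨y, hy⟩ := hCne
      have h1 : y ∈ x l := (hxC y hy l hl).2 (Nat.even_iff.1 hel)
      have h3 : y ∉ x k := fun h => by
        have := (hxC y hy k hk).1 h
        have := Nat.odd_iff.1 hok
        omega
      exact h3 (by rw [heq]; exact h1)
    · have h2k := Nat.odd_iff.1 hok
      have h2l := Nat.odd_iff.1 hol
      have him : (k-1)/2 < m := by omega
      have h1 : aSeq ((k-1)/2) ∈ x l := (hxA _ him l hl).2 (Or.inr ⟨h2l, by omega⟩)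
      have h3 : aSeq ((k-1)/2) ∉ x k := fun h => by
        have := (hxA _ him k hk).1 h
        omega
      exact h3 (by rw [heq]; exact h1)
  have hxinj : ∀ k ≤ 2*m, ∀ l ≤ 2*m, x k = x l → k = l := by
    intro k hk l hl heq
    by_contra hne
    rcases Nat.lt_or_ge k l with h | h
    · exact hxlt k l hk hl h heq
    · exact hxlt l k hl hk (by omega) heq.symm
  -- assemble the walk
  let F : ℕ → {s : Finset (Fin (2*r+1)) // s.card = r} :=
    fun k => ⟨x (min k (2*m)), hxcard _ (min_le_right _ _)⟩
  have hFeq : ∀ k ≤ 2*m, (F k).1 = x k := by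
    intro k hk
    show x (min k (2*m)) = x k
    rw [min_eq_left hk]
  have hadj : ∀ k < 2*m, (kneser (2*r+1) r).Adj (F k) (F (k+1)) := by
    intro k hk
    refine (⟨?_, ?_⟩ : F k ≠ F (k+1) ∧ Disjoint (F k).1 (F (k+1)).1)
    · intro h
      have h' : (F k).1 = (F (k+1)).1 := congrArg Subtype.val h
      rw [hFeq k (by omega), hFeq (k+1) (by omega)] at h'
      have := hxinj k (by omega) (k+1) (by omega) h'
      omega
    · show Disjoint (F k).1 (F (k+1)).1
      rw [hFeq k (by omega), hFeq (k+1) (by omega)]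
      exact hxdisj k hk
  have hF0 : F 0 = a := Subtype.ext (by rw [hFeq 0 (by omega)]; exact hx0)
  have hF2m : F (2*m) = b := Subtype.ext (by rw [hFeq (2*m) le_rfl]; exact hx2m)
  have hsupp : ((myWalkOfFn (2*m) F hadj).copy hF0 hF2m).support = (List.range (2*m+1)).map F := by
    rw [Walk.support_copy, myWalkOfFn_support]
  refine ⟨(myWalkOfFn (2*m) F hadj).copy hF0 hF2m, ⟨?_, ?_⟩, ?_, ?_⟩
  · apply Walk.IsPath.mk'
    rw [hsupp]
    apply List.Nodup.map_on _ List.nodup_range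
    intro k hk l hl hFkl
    have hk' := List.mem_range.1 hk
    have hl' := List.mem_range.1 hl
    have h' : (F k).1 = (F l).1 := congrArg Subtype.val hFkl
    rw [hFeq k (by omega), hFeq l (by omega)] at h'
    exact hxinj k (by omega) l (by omega) h'
  · intro u v hu hv huv
    rw [hsupp] at hu hv
    obtain ⟨k, hk, rfl⟩ := List.mem_map.1 hu
    obtain ⟨l, hl, rfl⟩ := List.mem_map.1 hv
    have hk' : k ≤ 2*m := by have := List.mem_range.1 hk; omega
    have hl' : l ≤ 2*m := by have := List.mem_range.1 hl; omega
    have huv' : F k ≠ F l ∧ Disjoint (F k).1 (F l).1 := huv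
    have hdisj : Disjoint (x k) (x l) := by
      have h := huv'.2
      rwa [hFeq k hk', hFeq l hl'] at h
    have hne : k ≠ l := fun h => huv'.1 (by rw [h])
    have hkl : l = k + 1 ∨ k = l + 1 := by
      by_contra hc
      push_neg at hc
      rcases Nat.lt_or_ge k l with h | h
      · exact hxfar k l hk' hl' (by omega) hdisj
      · exact hxfar l k hl' hk' (by omega) hdisj.symm
    rw [myToSubgraph_copy]
    rcases hkl with h | h
    · subst h
      have hg := Walk.toSubgraph_adj_getVert (myWalkOfFn (2*m) F hadj)
        (i := k) (by rw [myWalkOfFn_length]; omega)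
      rwa [myWalkOfFn_getVert, myWalkOfFn_getVert, min_eq_left hk',
        min_eq_left hl'] at hg
    · subst h
      have hg := Walk.toSubgraph_adj_getVert (myWalkOfFn (2*m) F hadj)
        (i := l) (by rw [myWalkOfFn_length]; omega)
      rw [myWalkOfFn_getVert, myWalkOfFn_getVert, min_eq_left hl',
        min_eq_left hk'] at hg
      exact hg.symm
  · rw [Walk.length_copy, myWalkOfFn_length]
  · rw [hsupp, List.map_map]
    apply List.map_congr_left
    intro k hk
    have hk' := List.mem_range.1 hk
    simp only [Function.comp_apply]
    exact hFeq k (by omega)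
end

section
/- If G is a strongly 2-monophonic graph not isomorphic to the path P_3, then G has no cut vertices. -/
open SimpleGraph

variable {V : Type*}

section AuxAll
variable {V : Type*} {G : SimpleGraph V} [DecidableEq V]

/-- In a path, if `v` is in both the take-until-`m` and drop-until-`m` parts, then `v = m`. -/
private lemma aux_unique_cross {x y m v : V} {p : G.Walk x y} (hp : p.IsPath)
    (hm : m ∈ p.support) (h1 : v ∈ (p.takeUntil m hm).support)
    (h2 : v ∈ (p.dropUntil m hm).support) : v = m := by
  by_contra hvm
  have hnd : p.support.Nodup := hp.support_nodup
  have hsp : (p.takeUntil m hm).support ++ (p.dropUntil m hm).support.tail = p.support := by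
    rw [← Walk.support_append, Walk.take_spec]
  rw [← hsp] at hnd
  have h2' : v ∈ (p.dropUntil m hm).support.tail := by
    have := (p.dropUntil m hm).support_eq_cons
    rw [this] at h2
    rcases List.mem_cons.mp h2 with h | h
    · exact absurd h hvm
    · exact h
  exact (List.disjoint_of_nodup_append hnd) h1 h2'

private lemma aux_avoid_take {x y v w : V} {p : G.Walk x y} (hp : p.IsPath)
    (hv : v ∈ p.support) (hw : w ∈ (p.takeUntil v hv).support) (hwv : w ≠ v) :
    ∃ q : G.Walk x w, v ∉ q.support := by
  refine ⟨(p.takeUntil v hv).takeUntil w hw, fun hmem => ?_⟩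
  have hvend : v ∈ ((p.takeUntil v hv).dropUntil w hw).support :=
    Walk.end_mem_support _
  exact hwv ((aux_unique_cross (hp.takeUntil hv) hw hmem hvend).symm)

private lemma aux_avoid_drop {x y v w : V} {p : G.Walk x y} (hp : p.IsPath)
    (hv : v ∈ p.support) (hw : w ∈ (p.dropUntil v hv).support) (hwv : w ≠ v) :
    ∃ q : G.Walk w y, v ∉ q.support := by
  refine ⟨(p.dropUntil v hv).dropUntil w hw, fun hmem => ?_⟩
  have hvstart : v ∈ ((p.dropUntil v hv).takeUntil w hw).support :=
    Walk.start_mem_support _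
  exact hwv ((aux_unique_cross (hp.dropUntil hv) hw hvstart hmem).symm)

/-- An edge of a path incident to the start vertex: decomposition. -/
private lemma aux_edge_start {x y u : V} {p : G.Walk x y} (hp : p.IsPath)
    (he : s(x, u) ∈ p.edges) : ∃ (h : G.Adj x u) (q : G.Walk u y), p = Walk.cons h q := by
  cases p with
  | nil => simp at he
  | cons h q =>
    rename_i c
    rw [Walk.edges_cons, List.mem_cons] at he
    rcases he with he | he
    · rw [Sym2.eq, Sym2.rel_iff'] at he
      rcases he with he | he
      · have hu : u = c := by simpa using congrArg Prod.snd he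
        subst hu
        exact ⟨h, q, rfl⟩
      · exact absurd ((by simpa using congrArg Prod.fst he) : x = c) h.ne
    · exfalso
      have hxq : x ∈ q.support := Walk.fst_mem_support_of_mem_edges q he
      exact ((Walk.cons_isPath_iff h q).mp hp).2 hxq

private lemma aux_edge_start_unique {x y w u : V} {h : G.Adj x w} {q : G.Walk w y}
    (hp : (Walk.cons h q).IsPath) (he : s(x, u) ∈ (Walk.cons h q).edges) : u = w := by
  rw [Walk.edges_cons, List.mem_cons] at he
  rcases he with he | he
  · rw [Sym2.eq, Sym2.rel_iff'] at he
    rcases he with he | he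
    · simpa using congrArg Prod.snd he
    · exact absurd ((by simpa using congrArg Prod.fst he) : x = w) h.ne
  · exact absurd (Walk.fst_mem_support_of_mem_edges q he)
      ((Walk.cons_isPath_iff h q).mp hp).2

private lemma aux_reach {v : V} {a b : V} (p : G.Walk a b) (hv : v ∉ p.support)
    (ha : a ≠ v) (hb : b ≠ v) :
    (G.induce {u : V | u ≠ v}).Reachable ⟨a, ha⟩ ⟨b, hb⟩ := by
  induction p with
  | nil => rfl
  | @cons a c b h q ih =>
    have hc : c ≠ v := by
      rintro rfl
      exact hv (by rw [Walk.support_cons]; exact List.mem_cons_of_mem _ q.start_mem_support)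
    have hv' : v ∉ q.support := fun hm => hv (by rw [Walk.support_cons]; exact List.mem_cons_of_mem _ hm)
    exact (Adj.reachable (show (G.induce {u : V | u ≠ v}).Adj ⟨a, ha⟩ ⟨c, hc⟩ from h)).trans
      (ih hv' hc hb)



/-- Reachability avoiding the vertex `v`. -/
private def AvoidReach (G : SimpleGraph V) (v a b : V) : Prop :=
  ∃ p : G.Walk a b, v ∉ p.support

omit [DecidableEq V] in
private lemma AvoidReach.symm {v a b : V} (h : AvoidReach G v a b) : AvoidReach G v b a := by
  obtain ⟨p, hp⟩ := h
  exact ⟨p.reverse, by rwa [Walk.support_reverse, List.mem_reverse]⟩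

omit [DecidableEq V] in
private lemma AvoidReach.trans {v a b c : V} (h1 : AvoidReach G v a b)
    (h2 : AvoidReach G v b c) : AvoidReach G v a c := by
  obtain ⟨p, hp⟩ := h1
  obtain ⟨q, hq⟩ := h2
  refine ⟨p.append q, fun hm => ?_⟩
  rcases (Walk.mem_support_append_iff p q).mp hm with hm | hm
  · exact hp hm
  · exact hq hm

omit [DecidableEq V] in
private lemma AvoidReach.ne_left {v a b : V} (h : AvoidReach G v a b) : a ≠ v := by
  obtain ⟨p, hp⟩ := h
  exact fun e => hp (e ▸ p.start_mem_support)

omit [DecidableEq V] in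
private lemma AvoidReach.refl {v a : V} (ha : a ≠ v) : AvoidReach G v a a :=
  ⟨Walk.nil, by simp [Ne.symm ha]⟩

omit [DecidableEq V] in
private lemma aux_induced_reverse {x y : V} {p : G.Walk x y} (hp : IsInducedPath G p) :
    IsInducedPath G p.reverse := by
  refine ⟨hp.1.reverse, fun a b ha hb hab => ?_⟩
  rw [Walk.toSubgraph_reverse]
  exact hp.2 a b (by rwa [Walk.support_reverse, List.mem_reverse] at ha)
    (by rwa [Walk.support_reverse, List.mem_reverse] at hb) hab

omit [DecidableEq V] in
private lemma aux_getPath (h : Strongly2Monophonic G) {v a b : V}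
    (ha : a ≠ v) (hb : b ≠ v) (hR : ¬ AvoidReach G v a b) (w : V) :
    ∃ p : G.Walk a b, IsInducedPath G p ∧ w ∈ p.support := by
  have hne : a ≠ b := by
    rintro rfl
    exact hR (AvoidReach.refl ha)
  have hnadj : ¬ G.Adj a b := fun hadj => hR ⟨Walk.cons hadj Walk.nil, by
    simp [Ne.symm ha, Ne.symm hb]⟩
  have hmono := h a b hne hnadj
  have extract : ∀ w' : V, (∃ s ∈ ({a, b} : Set V), ∃ t ∈ ({a, b} : Set V),
      w' ∈ monoInterval G s t) →
      w' = a ∨ w' = b ∨ ∃ p : G.Walk a b, IsInducedPath G p ∧ w' ∈ p.support := by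
    rintro w' ⟨s, hs, t, ht, p, hip, hwp⟩
    simp only [Set.mem_insert_iff, Set.mem_singleton_iff] at hs ht
    rcases hs with rfl | rfl <;> rcases ht with rfl | rfl
    · left
      rw [Walk.isPath_iff_eq_nil.mp hip.1] at hwp
      simpa using hwp
    · exact Or.inr (Or.inr ⟨p, hip, hwp⟩)
    · refine Or.inr (Or.inr ⟨p.reverse, aux_induced_reverse hip, ?_⟩)
      rwa [Walk.support_reverse, List.mem_reverse]
    · right; left
      rw [Walk.isPath_iff_eq_nil.mp hip.1] at hwp
      simpa using hwp
  have hp0 : ∃ p : G.Walk a b, IsInducedPath G p := by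
    rcases extract v (hmono v) with rfl | rfl | ⟨p, hip, _⟩
    · exact absurd rfl ha
    · exact absurd rfl hb
    · exact ⟨p, hip⟩
  obtain ⟨p0, hp0⟩ := hp0
  rcases extract w (hmono w) with rfl | rfl | hgood
  · exact ⟨p0, hp0, p0.start_mem_support⟩
  · exact ⟨p0, hp0, p0.end_mem_support⟩
  · exact hgood

private lemma aux_cross {v a b : V} (hR : ¬ AvoidReach G v a b) (p : G.Walk a b) :
    v ∈ p.support := by
  by_contra hv
  exact hR ⟨p, hv⟩

private lemma aux_clique (h : Strongly2Monophonic G) {v a b : V} (ha : a ≠ v) (hb : b ≠ v)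
    (hR : ¬ AvoidReach G v a b) {w1 w2 : V} (h1 : AvoidReach G v w1 a)
    (h2 : AvoidReach G v w2 a) (hne : w1 ≠ w2) : G.Adj w1 w2 := by
  by_contra hn
  have hR1b : ¬ AvoidReach G v w1 b := fun hc => hR ((h1.symm).trans hc)
  have hR2b : ¬ AvoidReach G v w2 b := fun hc => hR ((h2.symm).trans hc)
  have hbw1 : b ≠ w1 := by rintro rfl; exact hR (h1.symm)
  have hbw2 : b ≠ w2 := by rintro rfl; exact hR (h2.symm)
  obtain ⟨s, hs, t, ht, p, hip, hbp⟩ := h w1 w2 hne hn b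
  simp only [Set.mem_insert_iff, Set.mem_singleton_iff] at hs ht
  have key : ∀ (c d : V) (q : G.Walk c d), q.IsPath → b ∈ q.support →
      ¬ AvoidReach G v c b → ¬ AvoidReach G v b d → False := by
    intro c d q hq hbq hRcb hRbd
    have hvt : v ∈ (q.takeUntil b hbq).support := aux_cross hRcb _
    have hvd : v ∈ (q.dropUntil b hbq).support := aux_cross hRbd _
    exact hb (aux_unique_cross hq hbq hvt hvd).symm
  rcases hs with rfl | rfl <;> rcases ht with rfl | rfl
  · rw [Walk.isPath_iff_eq_nil.mp hip.1] at hbp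
    exact hbw1 (by simpa using hbp)
  · exact key _ _ p hip.1 hbp hR1b (fun hc => hR2b hc.symm)
  · exact key _ _ p hip.1 hbp hR2b (fun hc => hR1b hc.symm)
  · rw [Walk.isPath_iff_eq_nil.mp hip.1] at hbp
    exact hbw2 (by simpa using hbp)

private lemma aux_induced_edge {x y a b : V} {p : G.Walk x y} (hip : IsInducedPath G p)
    (hap : a ∈ p.support) (hbp : b ∈ p.support) (hadj : G.Adj a b) : s(a, b) ∈ p.edges :=
  (p.mem_edges_toSubgraph).mp (Subgraph.mem_edgeSet.mpr (hip.2 a b hap hbp hadj))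

private lemma aux_key (h : Strongly2Monophonic G) {v a b : V} (ha : a ≠ v) (hb : b ≠ v)
    (hR : ¬ AvoidReach G v a b) {w : V} (hw : AvoidReach G v w a) (hwa : w ≠ a) :
    ¬ G.Adj a v ∧ G.Adj w v := by
  obtain ⟨p, hip, hwp⟩ := aux_getPath h ha hb hR w
  have hvp : v ∈ p.support := aux_cross hR p
  have hwv : w ≠ v := hw.ne_left
  -- w lies on the take-until-v part
  have htk : w ∈ (p.takeUntil v hvp).support := by
    rcases (Walk.mem_support_append_iff _ _).mp
        (by rwa [Walk.take_spec p hvp] : w ∈ ((p.takeUntil v hvp).append (p.dropUntil v hvp)).support)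
      with htk | hdr
    · exact htk
    · exfalso
      obtain ⟨q, hq⟩ := aux_avoid_drop hip.1 hvp hdr hwv
      exact hR ((hw.symm).trans ⟨q, hq⟩)
  have hadj_aw : G.Adj a w := aux_clique h ha hb hR (AvoidReach.refl ha) hw (Ne.symm hwa)
  have hedge : s(a, w) ∈ p.edges := aux_induced_edge hip p.start_mem_support hwp hadj_aw
  obtain ⟨hadj', q, rfl⟩ := aux_edge_start hip.1 hedge
  have hqpath : q.IsPath := ((Walk.cons_isPath_iff hadj' q).mp hip.1).1
  have hanq : a ∉ q.support := ((Walk.cons_isPath_iff hadj' q).mp hip.1).2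
  have hvq : v ∈ q.support := by
    rw [Walk.support_cons] at hvp
    rcases List.mem_cons.mp hvp with he | hm
    · exact absurd he.symm ha
    · exact hm
  constructor
  · intro hav
    have he2 : s(a, v) ∈ (Walk.cons hadj' q).edges :=
      aux_induced_edge hip (Walk.start_mem_support _) (by rw [Walk.support_cons]; exact List.mem_cons_of_mem _ hvq) hav
    exact absurd (aux_edge_start_unique hip.1 he2).symm hwv
  · -- second vertex of q.takeUntil v must be v itself
    obtain ⟨u, hadj2, t', hteq⟩ := Walk.exists_eq_cons_of_ne hwv (q.takeUntil v hvq)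
    by_cases huv : u = v
    · exact huv ▸ hadj2
    · exfalso
      have hut : u ∈ (q.takeUntil v hvq).support := by
        rw [hteq, Walk.support_cons]
        exact List.mem_cons_of_mem _ t'.start_mem_support
      obtain ⟨r, hr⟩ := aux_avoid_take hqpath hvq hut huv
      have hua : AvoidReach G v u a := (AvoidReach.symm ⟨r, hr⟩).trans hw.symm.symm
      have hune_a : u ≠ a := fun he => hanq (he ▸ Walk.support_takeUntil_subset _ hvq hut)
      have hadj_au : G.Adj a u := aux_clique h ha hb hR (AvoidReach.refl ha) hua (Ne.symm hune_a)
      have he3 : s(a, u) ∈ (Walk.cons hadj' q).edges :=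
        aux_induced_edge hip (Walk.start_mem_support _)
          (by rw [Walk.support_cons]; exact List.mem_cons_of_mem _ (Walk.support_takeUntil_subset _ hvq hut)) hadj_au
      have : u = w := aux_edge_start_unique hip.1 he3
      exact hadj2.ne (this ▸ rfl)

end AuxAll

theorem stmt8 {V : Type*} (G : SimpleGraph V) (h : Strongly2Monophonic G)
    (hP3 : ¬ Nonempty (G ≃g pathGraph 3)) :
    ∀ v : V, ¬ (G.Connected ∧ ¬ (G.induce {u : V | u ≠ v}).Preconnected) := by
  classical
  rintro v ⟨hconn, hpre⟩
  rw [Preconnected] at hpre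
  push_neg at hpre
  obtain ⟨⟨x, hx⟩, ⟨y, hy⟩, hxy⟩ := hpre
  have hxv : x ≠ v := hx
  have hyv : y ≠ v := hy
  have hRxy : ¬ AvoidReach G v x y := fun ⟨p, hp⟩ => hxy (aux_reach p hp hxv hyv)
  have hRyx : ¬ AvoidReach G v y x := fun hc => hRxy hc.symm
  have xOnly : ∀ w, AvoidReach G v w x → w = x := by
    intro w hw
    by_contra hne
    obtain ⟨hnxv, -⟩ := aux_key h hxv hyv hRxy hw hne
    have hRwy : ¬ AvoidReach G v w y := fun hc => hRxy ((hw.symm).trans hc)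
    obtain ⟨-, hxvadj⟩ := aux_key h hw.ne_left hyv hRwy hw.symm (fun e => hne e.symm)
    exact hnxv hxvadj
  have yOnly : ∀ w, AvoidReach G v w y → w = y := by
    intro w hw
    by_contra hne
    obtain ⟨hnyv, -⟩ := aux_key h hyv hxv hRyx hw hne
    have hRwx : ¬ AvoidReach G v w x := fun hc => hRyx ((hw.symm).trans hc)
    obtain ⟨-, hyvadj⟩ := aux_key h hw.ne_left hxv hRwx hw.symm (fun e => hne e.symm)
    exact hnyv hyvadj
  have htri : ∀ w : V, w = x ∨ w = v ∨ w = y := by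
    intro w
    by_cases hwv : w = v
    · exact Or.inr (Or.inl hwv)
    · obtain ⟨p, hip, hwp⟩ := aux_getPath h hxv hyv hRxy w
      have hvp : v ∈ p.support := aux_cross hRxy p
      rcases (Walk.mem_support_append_iff _ _).mp
          (by rwa [Walk.take_spec p hvp] :
            w ∈ ((p.takeUntil v hvp).append (p.dropUntil v hvp)).support) with htk | hdr
      · obtain ⟨q, hq⟩ := aux_avoid_take hip.1 hvp htk hwv
        exact Or.inl (xOnly w (AvoidReach.symm ⟨q, hq⟩))
      · obtain ⟨q, hq⟩ := aux_avoid_drop hip.1 hvp hdr hwv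
        exact Or.inr (Or.inr (yOnly w ⟨q, hq⟩))
  have hAdjxv : G.Adj x v := by
    obtain ⟨p, hip, -⟩ := aux_getPath h hxv hyv hRxy v
    have hvp : v ∈ p.support := aux_cross hRxy p
    obtain ⟨c, hadj, t, hteq⟩ := Walk.exists_eq_cons_of_ne hxv (p.takeUntil v hvp)
    by_cases hcv : c = v
    · exact hcv ▸ hadj
    · exfalso
      have hct : c ∈ (p.takeUntil v hvp).support := by
        rw [hteq, Walk.support_cons]
        exact List.mem_cons_of_mem _ t.start_mem_support
      obtain ⟨q, hq⟩ := aux_avoid_take hip.1 hvp hct hcv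
      exact hadj.ne ((xOnly c (AvoidReach.symm ⟨q, hq⟩)).symm)
  have hAdjyv : G.Adj y v := by
    obtain ⟨p, hip, -⟩ := aux_getPath h hyv hxv hRyx v
    have hvp : v ∈ p.support := aux_cross hRyx p
    obtain ⟨c, hadj, t, hteq⟩ := Walk.exists_eq_cons_of_ne hyv (p.takeUntil v hvp)
    by_cases hcv : c = v
    · exact hcv ▸ hadj
    · exfalso
      have hct : c ∈ (p.takeUntil v hvp).support := by
        rw [hteq, Walk.support_cons]
        exact List.mem_cons_of_mem _ t.start_mem_support
      obtain ⟨q, hq⟩ := aux_avoid_take hip.1 hvp hct hcv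
      exact hadj.ne ((yOnly c (AvoidReach.symm ⟨q, hq⟩)).symm)
  have hnxy : ¬ G.Adj x y := fun hadj => hRxy ⟨Walk.cons hadj Walk.nil, by
    simp [Ne.symm hxv, Ne.symm hyv]⟩
  have hnyx : ¬ G.Adj y x := fun hadj => hnxy hadj.symm
  have hxyne : x ≠ y := by
    rintro rfl
    exact hRxy (AvoidReach.refl hxv)
  have hvx : v ≠ x := Ne.symm hxv
  have hvy : v ≠ y := Ne.symm hyv
  have hyx : y ≠ x := Ne.symm hxyne
  classical
  let f : V → Fin 3 := fun w => if w = x then 0 else if w = v then 1 else 2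
  have hfx : f x = 0 := by simp [f]
  have hfv : f v = 1 := by simp [f, hvx]
  have hfy : f y = 2 := by simp [f, hyx, hyv]
  let e : V ≃ Fin 3 :=
    { toFun := f
      invFun := ![x, v, y]
      left_inv := by
        intro w
        rcases htri w with rfl | rfl | rfl
        · rw [hfx]; simp
        · rw [hfv]; simp
        · rw [hfy]; simp
      right_inv := by
        intro i
        fin_cases i
        · simpa using hfx
        · simpa using hfv
        · simpa using hfy }
  refine hP3 ⟨{ toEquiv := e, map_rel_iff' := ?_ }⟩
  intro a b
  show (pathGraph 3).Adj (f a) (f b) ↔ G.Adj a b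
  rcases htri a with rfl | rfl | rfl <;> rcases htri b with rfl | rfl | rfl <;>
    simp [hfx, hfv, hfy, pathGraph_adj, hAdjxv, hAdjyv, hAdjxv.symm, hAdjyv.symm,
      hnxy, hnyx, G.irrefl]
end

section
/- If G is a strongly 2-monophonic graph, then for every vertex x of G, the closed neighborhood N[x] is not a cut set of G (its removal does not disconnect G). -/
open SimpleGraph

variable {V : Type*}

section Aux

variable {G : SimpleGraph V}

lemma liftWalk (S : Set V) {a b : V} (q : G.Walk a b)
    (hS : ∀ w ∈ q.support, w ∈ S) :
    (G.induce S).Reachable ⟨a, hS a q.start_mem_support⟩ ⟨b, hS b q.end_mem_support⟩ := by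
  induction q with
  | nil => exact Reachable.refl _
  | @cons a c b hadj p ih =>
    have h1 : ∀ w ∈ p.support, w ∈ S := fun w hw => hS w (by simp [hw])
    have hadj' : (G.induce S).Adj ⟨a, hS a (by simp)⟩ ⟨c, h1 c p.start_mem_support⟩ := hadj
    exact hadj'.reachable.trans (ih h1)

lemma inducedReverse {u v : V} {p : G.Walk u v} (hp : IsInducedPath G p) :
    IsInducedPath G p.reverse := by
  refine ⟨hp.1.reverse, ?_⟩
  intro a b ha hb hab
  rw [Walk.support_reverse, List.mem_reverse] at ha hb
  rw [Walk.toSubgraph_reverse]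
  exact hp.2 a b ha hb hab

lemma escape {x u : V} (p : G.Walk x u) (hp : IsInducedPath G p)
    {v : V} (hv : v ∈ p.support) (hvx : v ≠ x) (hvadj : ¬ G.Adj x v) :
    ∃ q : G.Walk v u, ∀ w ∈ q.support, w ≠ x ∧ ¬ G.Adj x w := by
  classical
  cases p with
  | nil =>
    simp only [Walk.support_nil, List.mem_singleton] at hv
    exact absurd hv hvx
  | @cons _ c _ hadj q =>
    have hpath := hp.1
    rw [Walk.cons_isPath_iff] at hpath
    obtain ⟨hqpath, hxq⟩ := hpath
    have hvq : v ∈ q.support := by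
      simp only [Walk.support_cons, List.mem_cons] at hv
      exact hv.resolve_left hvx
    have hvc : v ≠ c := fun h => hvadj (h ▸ hadj)
    refine ⟨q.dropUntil v hvq, ?_⟩
    have hcdrop : c ∉ (q.dropUntil v hvq).support := by
      have hnodup := hqpath.support_nodup
      rw [← q.take_spec hvq, Walk.support_append] at hnodup
      have hdisj := List.disjoint_of_nodup_append hnodup
      intro hc
      rw [(q.dropUntil v hvq).support_eq_cons, List.mem_cons] at hc
      rcases hc with hc | hc
      · exact hvc hc.symm
      · exact hdisj (q.takeUntil v hvq).start_mem_support hc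
    intro w hw
    have hwq : w ∈ q.support := q.support_dropUntil_subset hvq hw
    have hwx : w ≠ x := fun h => hxq (h ▸ hwq)
    refine ⟨hwx, fun hadjxw => ?_⟩
    have := hp.2 x w (by simp) (by simp [hwq]) hadjxw
    simp only [Walk.toSubgraph, Subgraph.sup_adj] at this
    rcases this with h1 | h2
    · simp only [subgraphOfAdj_adj, Sym2.eq, Sym2.rel_iff', Prod.mk.injEq,
        Prod.swap_prod_mk] at h1
      rcases h1 with ⟨-, hwc⟩ | ⟨hxw', -⟩
      · exact hcdrop (hwc ▸ hw)
      · exact hwx hxw'.symm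
    · exact hxq ((Walk.mem_verts_toSubgraph q).mp h2.fst_mem)

end Aux

theorem stmt9 {V : Type*} (G : SimpleGraph V) (h : Strongly2Monophonic G) :
    ∀ x : V, (G.induce ((G.neighborSet x ∪ {x})ᶜ)).Preconnected := by
  intro x u v
  have hu' : (u : V) ≠ x ∧ ¬ G.Adj x u := by
    simpa [not_or] using u.2
  have hv' : (v : V) ≠ x ∧ ¬ G.Adj x v := by
    simpa [not_or] using v.2
  have hmemS : ∀ w : V, w ≠ x → ¬ G.Adj x w → w ∈ (G.neighborSet x ∪ {x})ᶜ := by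
    intro w h1 h2
    simp [mem_neighborSet, h1, h2]
  by_cases heq : (u : V) = (v : V)
  · rw [Subtype.ext heq]
  have key : ∀ (p : G.Walk x (u : V)), IsInducedPath G p → (v : V) ∈ p.support →
      (G.induce ((G.neighborSet x ∪ {x})ᶜ)).Reachable u v := by
    intro p hip hvp
    obtain ⟨q, hq⟩ := escape p hip hvp hv'.1 hv'.2
    have hqS : ∀ w ∈ q.support, w ∈ (G.neighborSet x ∪ {x})ᶜ :=
      fun w hw => hmemS w (hq w hw).1 (hq w hw).2
    exact (liftWalk _ q hqS).symm
  obtain ⟨a, ha, b, hb, p, hip, hvp⟩ := h x (u : V) (Ne.symm hu'.1) (fun had => hu'.2 had) (v : V)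
  simp only [Set.mem_insert_iff, Set.mem_singleton_iff] at ha hb
  obtain rfl | rfl := ha <;> obtain rfl | rfl := hb
  · rw [Walk.isPath_iff_eq_nil.mp hip.1] at hvp
    simp only [Walk.support_nil, List.mem_singleton] at hvp
    exact absurd hvp hv'.1
  · exact key p hip hvp
  · exact key p.reverse (inducedReverse hip) (by simpa [Walk.support_reverse] using hvp)
  · rw [Walk.isPath_iff_eq_nil.mp hip.1] at hvp
    simp only [Walk.support_nil, List.mem_singleton] at hvp
    exact absurd hvp.symm heq
end

section
/- If G is a strongly 2-monophonic graph and x,y are vertices with N(y) ⊆ N(x), then N[x] = V(G) \ {y}. -/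
open SimpleGraph

variable {V : Type*}

lemma getVert_injOn' {V : Type*} {G : SimpleGraph V} {u v : V} (p : G.Walk u v)
    (hp : p.IsPath) : ∀ i ≤ p.length, ∀ j ≤ p.length, p.getVert i = p.getVert j → i = j := by
  induction p with
  | nil => intro i hi j hj _; simp [Walk.length_nil] at hi hj; omega
  | cons hadj q ih =>
    intro i hi j hj hij
    rw [Walk.cons_isPath_iff] at hp
    match i, j with
    | 0, 0 => rfl
    | 0, (k+1) =>
      exfalso
      apply hp.2
      rw [Walk.mem_support_iff_exists_getVert]
      exact ⟨k, by simpa [Walk.getVert] using hij.symm, by simpa [Walk.length_cons] using hj⟩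
    | (k+1), 0 =>
      exfalso
      apply hp.2
      rw [Walk.mem_support_iff_exists_getVert]
      exact ⟨k, by simpa [Walk.getVert] using hij, by simpa [Walk.length_cons] using hi⟩
    | (k+1), (l+1) =>
      have := ih hp.1 k (by simpa [Walk.length_cons] using hi) l
        (by simpa [Walk.length_cons] using hj) (by simpa [Walk.getVert] using hij)
      omega

lemma key_lemma {V : Type*} {G : SimpleGraph V} {x y : V} (hxy : x ≠ y)
    (hnadj : ¬ G.Adj x y) (hN : G.neighborSet y ⊆ G.neighborSet x)
    (p : G.Walk x y) (hp : IsInducedPath G p) :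
    ∀ w ∈ p.support, w = x ∨ G.Adj x w ∨ w = y := by
  have hinj := getVert_injOn' p hp.1
  have h0 : p.getVert 0 = x := p.getVert_zero
  have hL : p.getVert p.length = y := p.getVert_length
  have hlen2 : 2 ≤ p.length := by
    rcases Nat.lt_or_ge p.length 2 with hl | hl
    · interval_cases hle : p.length
      · exact absurd (h0.symm.trans (hle ▸ hL)) hxy
      · have := p.adj_getVert_succ (i := 0) (by omega)
        rw [show (0:ℕ)+1 = 1 from rfl, h0, hL] at this
        exact absurd this hnadj
    · exact hl
  -- penultimate vertex
  set z := p.getVert (p.length - 1) with hz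
  have hzy : G.Adj z y := by
    have := p.adj_getVert_succ (i := p.length - 1) (by omega)
    rwa [show p.length - 1 + 1 = p.length by omega, hL] at this
  have hxz : G.Adj x z := hN hzy.symm
  have hzsupp : z ∈ p.support := by
    rw [Walk.mem_support_iff_exists_getVert]
    exact ⟨p.length - 1, rfl, by omega⟩
  have hsub : p.toSubgraph.Adj x z := hp.2 x z p.start_mem_support hzsupp hxz
  rw [Walk.toSubgraph_adj_iff] at hsub
  obtain ⟨i, hsym, hilt⟩ := hsub
  rw [Sym2.eq_iff] at hsym
  have hlen : p.length = 2 := by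
    rcases hsym with ⟨hi1, hi2⟩ | ⟨hi1, hi2⟩
    · have : i = 0 := hinj i (by omega) 0 (by omega) (hi1.trans h0.symm)
      subst this
      have := hinj 1 (by omega) (p.length - 1) (by omega) (hi2.trans hz)
      omega
    · have : i + 1 = 0 := hinj (i+1) (by omega) 0 (by omega) (hi2.trans h0.symm)
      omega
  intro w hw
  rw [Walk.mem_support_iff_exists_getVert] at hw
  obtain ⟨n, hn, hnle⟩ := hw
  rw [hlen] at hnle
  interval_cases n
  · exact Or.inl (hn ▸ h0).symm.symm
  · refine Or.inr (Or.inl ?_)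
    have := p.adj_getVert_succ (i := 0) (by omega)
    rwa [h0, hn] at this
  · exact Or.inr (Or.inr (by rw [← hn, ← hlen, hL]))


theorem stmt10 {V : Type*} (G : SimpleGraph V) (h : Strongly2Monophonic G)
    (x y : V) (hxy : x ≠ y) (hN : G.neighborSet y ⊆ G.neighborSet x) :
    G.neighborSet x ∪ {x} = Set.univ \ {y} := by
  have hnadj : ¬ G.Adj x y := by
    intro hadj
    exact G.loopless.irrefl x (hN hadj.symm)
  ext w
  simp only [Set.mem_union, Set.mem_singleton_iff, Set.mem_diff, Set.mem_univ, true_and,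
    mem_neighborSet]
  constructor
  · rintro (hadj | rfl)
    · rintro rfl; exact hnadj hadj
    · exact hxy
  · intro hwy
    obtain ⟨a, ha, b, hb, q, hq, hwq⟩ := h x y hxy hnadj w
    have trivcase : ∀ (u : V) (r : G.Walk u u), IsInducedPath G r → w ∈ r.support → w = u := by
      intro u r hr hwr
      have h0 : r.length = 0 := by
        have := getVert_injOn' r hr.1 r.length le_rfl 0 (by omega)
          (r.getVert_length.trans r.getVert_zero.symm)
        omega
      rw [Walk.mem_support_iff_exists_getVert] at hwr
      obtain ⟨n, hn, hnle⟩ := hwr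
      rw [h0, Nat.le_zero] at hnle
      subst hnle
      exact (hn ▸ r.getVert_zero).symm.symm
    simp only [Set.mem_insert_iff, Set.mem_singleton_iff] at ha hb
    rcases ha with rfl | rfl <;> rcases hb with rfl | rfl
    · exact Or.inr (trivcase _ q hq hwq)
    · rcases key_lemma hxy hnadj hN q hq w hwq with h1 | h1 | h1
      · exact Or.inr h1
      · exact Or.inl h1
      · exact absurd h1 hwy
    · have hq' : IsInducedPath G q.reverse := by
        refine ⟨hq.1.reverse, fun c d hc hd hcd => ?_⟩
        rw [Walk.support_reverse, List.mem_reverse] at hc hd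
        rw [Walk.toSubgraph_reverse]
        exact hq.2 c d hc hd hcd
      have hwq' : w ∈ q.reverse.support := by
        rw [Walk.support_reverse, List.mem_reverse]; exact hwq
      rcases key_lemma hxy hnadj hN q.reverse hq' w hwq' with h1 | h1 | h1
      · exact Or.inr h1
      · exact Or.inl h1
      · exact absurd h1 hwy
    · exact absurd (trivcase _ q hq hwq) hwy
end

section
/- If G is a strongly 2-monophonic graph and x,y are vertices with N[y] ⊆ N[x], then x is a universal vertex of G (adjacent to all other vertices). -/
open SimpleGraph

variable {V : Type*}

section Aux
open SimpleGraph Walk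
variable {V : Type*} {G : SimpleGraph V}

lemma path_adj_start {x a z b : V} (hadj : G.Adj x a)
    (q : G.Walk a z) (hp : (Walk.cons hadj q).IsPath)
    (hb : (Walk.cons hadj q).toSubgraph.Adj x b) : b = a := by
  have he : s(x, b) ∈ (Walk.cons hadj q).edges :=
    ((Walk.cons hadj q).mem_edges_toSubgraph).mp (Subgraph.mem_edgeSet.mpr hb)
  rw [Walk.edges_cons, List.mem_cons] at he
  rcases he with he | he
  · rw [Sym2.eq_iff] at he
    rcases he with ⟨-, rfl⟩ | ⟨rfl, rfl⟩
    · rfl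
    · exact absurd q.start_mem_support ((Walk.cons_isPath_iff hadj q).mp hp).2
  · exact absurd (q.fst_mem_support_of_mem_edges he)
      ((Walk.cons_isPath_iff hadj q).mp hp).2

lemma key_contra {x z y : V} (hxy : x ≠ y) (hzy : z ≠ y)
    (hN : G.neighborSet y ∪ {y} ⊆ G.neighborSet x ∪ {x})
    (hxyadj : G.Adj x y)
    (p : G.Walk x z) (hip : IsInducedPath G p) (hyp : y ∈ p.support) : False := by
  cases p with
  | nil => exact hxy (Walk.mem_support_nil_iff.mp hyp).symm
  | cons hadj q =>
    have hxy2 : (Walk.cons hadj q).toSubgraph.Adj x y :=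
      hip.2 x y (Walk.start_mem_support _) hyp hxyadj
    obtain rfl := path_adj_start hadj q hip.1 hxy2
    cases q with
    | nil => exact hzy rfl
    | cons hadj2 r =>
      rename_i b
      have hpq : (Walk.cons hadj2 r).IsPath ∧ x ∉ (Walk.cons hadj2 r).support :=
        (Walk.cons_isPath_iff hadj _).mp hip.1
      have hbx : b ≠ x := fun hbe => hpq.2 (by subst hbe; simp)
      have hxb : G.Adj x b := by
        rcases hN (Or.inl hadj2 : b ∈ G.neighborSet y ∪ {y}) with hh | hh
        · exact hh
        · exact absurd hh hbx
      have hby : b ≠ y := by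
        rintro rfl
        exact ((Walk.cons_isPath_iff hadj2 r).mp hpq.1).2 (r.start_mem_support)
      have hbsup : b ∈ (Walk.cons hadj (Walk.cons hadj2 r)).support := by simp
      have := path_adj_start hadj _ hip.1
        (hip.2 x b (Walk.start_mem_support _) hbsup hxb)
      exact hby this

end Aux
theorem stmt11 {V : Type*} (G : SimpleGraph V) (h : Strongly2Monophonic G)
    (x y : V) (hxy : x ≠ y)
    (hN : G.neighborSet y ∪ {y} ⊆ G.neighborSet x ∪ {x}) :
    ∀ z : V, z ≠ x → G.Adj x z := by
  intro z hz
  have hxyadj : G.Adj x y := by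
    rcases hN (Or.inr rfl : y ∈ G.neighborSet y ∪ {y}) with hh | hh
    · exact hh
    · exact absurd hh hxy.symm
  by_contra hnadj
  have hzy : z ≠ y := fun hh => hnadj (hh ▸ hxyadj)
  obtain ⟨a, ha, b, hb, p, hip, hyp⟩ := h x z hz.symm hnadj y
  have hrev : ∀ (u v : V) (q : G.Walk u v), IsInducedPath G q → y ∈ q.support →
      ((u = x ∧ v = z) ∨ (u = x ∧ v = x) ∨ (u = z ∧ v = z) ∨ (u = z ∧ v = x)) → False := by
    rintro u v q hq hyq (⟨rfl, rfl⟩ | ⟨rfl, rfl⟩ | ⟨rfl, rfl⟩ | ⟨rfl, rfl⟩)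
    · exact key_contra hxy hzy hN hxyadj q hq hyq
    · rw [Walk.isPath_iff_eq_nil.mp hq.1] at hyq
      exact hxy (Walk.mem_support_nil_iff.mp hyq).symm
    · rw [Walk.isPath_iff_eq_nil.mp hq.1] at hyq
      exact hzy (Walk.mem_support_nil_iff.mp hyq).symm
    · refine key_contra hxy hzy hN hxyadj q.reverse ⟨hq.1.reverse, ?_⟩ ?_
      · intro c d hc hd hcd
        rw [Walk.toSubgraph_reverse]
        exact hq.2 c d (by simpa using hc) (by simpa using hd) hcd
      · simpa using hyq
  rcases ha with rfl | rfl <;> rcases hb with rfl | rfl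
  · exact hrev _ _ p hip hyp (Or.inr (Or.inl ⟨rfl, rfl⟩))
  · exact hrev _ _ p hip hyp (Or.inl ⟨rfl, rfl⟩)
  · exact hrev _ _ p hip hyp (Or.inr (Or.inr (Or.inr ⟨rfl, rfl⟩)))
  · exact hrev _ _ p hip hyp (Or.inr (Or.inr (Or.inl ⟨rfl, rfl⟩)))
end

section
/- Let G be a non-complete graph with the property that for any three vertices, one of which is non-adjacent to the other two, there is an induced cycle passing through all three. Then G is strongly 2-monophonic. -/
open SimpleGraph

variable {V : Type*}

/-- In a closed walk that is not nil, every support vertex is in the support tail. -/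
lemma mem_tail_of_mem_support_closed {G : SimpleGraph V} {v : V} {p : G.Walk v v}
    (hp : p ≠ SimpleGraph.Walk.nil) {z : V} (hz : z ∈ p.support) : z ∈ p.support.tail := by
  cases p with
  | nil => exact absurd rfl hp
  | cons h q =>
    simp only [Walk.support_cons, List.mem_cons, List.tail_cons] at hz ⊢
    rcases hz with hz1 | hz1
    · exact hz1 ▸ q.end_mem_support
    · exact hz1

/-- Edge-form of the induced condition. -/
lemma induced_edge_form {G : SimpleGraph V} {u v : V} {p : G.Walk u v}
    (h : ∀ a b : V, a ∈ p.support → b ∈ p.support → G.Adj a b → p.toSubgraph.Adj a b)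
    {a b : V} (ha : a ∈ p.support) (hb : b ∈ p.support) (hab : G.Adj a b) :
    s(a, b) ∈ p.edges := by
  rw [← Walk.mem_edges_toSubgraph, Subgraph.mem_edgeSet]
  exact h a b ha hb hab

lemma toSubgraph_adj_of_mem_edges {G : SimpleGraph V} {u v : V} (p : G.Walk u v)
    {a b : V} (h : s(a, b) ∈ p.edges) : p.toSubgraph.Adj a b := by
  rw [← Subgraph.mem_edgeSet, Walk.mem_edges_toSubgraph]
  exact h

/-- Key lemma for a cycle based at `x`. -/
lemma mono_of_cycle_based [DecidableEq V] {G : SimpleGraph V} {x y : V} (hxy : x ≠ y)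
    (hnadj : ¬ G.Adj x y) (c : G.Walk x x) (hcyc : c.IsCycle)
    (hind : ∀ a b : V, a ∈ c.support → b ∈ c.support → G.Adj a b → s(a, b) ∈ c.edges)
    (hy : y ∈ c.support) {w : V} (hw : w ∈ c.support) : w ∈ monoInterval G x y := by
  cases c with
  | nil => exact absurd rfl hcyc.ne_nil
  | @cons _ v0 _ h0 q =>
    obtain ⟨hq, hne⟩ := (Walk.cons_isCycle_iff q h0).1 hcyc
    have hyq : y ∈ q.support := by
      simp only [Walk.support_cons, List.mem_cons] at hy
      rcases hy with h | h
      · exact absurd h.symm hxy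
      · exact h
    set t := q.takeUntil y hyq with ht_def
    set d := q.dropUntil y hyq with hd_def
    have spec : t.append d = q := q.take_spec hyq
    have ht : t.IsPath := hq.takeUntil hyq
    have hd : d.IsPath := hq.dropUntil hyq
    have qsup : q.support = t.support ++ d.support.tail := by
      rw [← spec, Walk.support_append]
    have qedges : q.edges = t.edges ++ d.edges := by
      rw [← spec, Walk.edges_append]
    have hnodup : (t.support ++ d.support.tail).Nodup := by
      rw [← qsup]; exact hq.support_nodup
    have disj : ∀ z : V, z ∈ t.support → z ∈ d.support.tail → False := by
      intro z h1 h2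
      exact (List.disjoint_of_nodup_append hnodup) h1 h2
    have hxdt : x ∈ d.support.tail := Walk.end_mem_tail_support_of_ne (Ne.symm hxy) d
    have hxt : x ∉ t.support := fun h => disj x h hxdt
    have hv0y : v0 ≠ y := fun h => hnadj (h ▸ h0)
    have hv0d : v0 ∉ d.support := by
      intro h
      rw [Walk.support_eq_cons, List.mem_cons] at h
      rcases h with h | h
      · exact hv0y h
      · exact disj v0 t.start_mem_support h
    -- crossing claim
    have cross : ∀ z : V, z ∈ t.support → z ∈ d.support → z = y := by
      intro z h1 h2
      rw [Walk.support_eq_cons, List.mem_cons] at h2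
      rcases h2 with h2 | h2
      · exact h2
      · exact absurd (disj z h1 h2) not_false
    -- membership of arc supports in c.support
    have tsub : ∀ z : V, z ∈ t.support → z ∈ (Walk.cons h0 q).support := by
      intro z h
      rw [Walk.support_cons, List.mem_cons]
      exact Or.inr (Walk.support_takeUntil_subset q hyq h)
    have dsub : ∀ z : V, z ∈ d.support → z ∈ (Walk.cons h0 q).support := by
      intro z h
      rw [Walk.support_cons, List.mem_cons]
      exact Or.inr (Walk.support_dropUntil_subset q hyq h)
    -- Arc 1 : cons h0 t, from x to y
    have arc1path : (Walk.cons h0 t).IsPath := by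
      rw [Walk.cons_isPath_iff]; exact ⟨ht, hxt⟩
    have arc1ind : IsInducedPath G (Walk.cons h0 t) := by
      refine ⟨arc1path, fun a b ha hb hab => ?_⟩
      apply toSubgraph_adj_of_mem_edges
      rw [Walk.support_cons, List.mem_cons] at ha hb
      have hac : a ∈ (Walk.cons h0 q).support := by
        rcases ha with rfl | ha
        · exact Walk.start_mem_support _
        · exact tsub a ha
      have hbc : b ∈ (Walk.cons h0 q).support := by
        rcases hb with rfl | hb
        · exact Walk.start_mem_support _
        · exact tsub b hb
      have hedge := hind a b hac hbc hab
      rw [Walk.edges_cons, qedges, List.mem_cons, List.mem_append] at hedge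
      rw [Walk.edges_cons, List.mem_cons]
      rcases hedge with h | h | h
      · exact Or.inl h
      · exact Or.inr h
      · -- edge in d: both endpoints in d.support, forcing {a,b} = {x,y}
        exfalso
        have had : a ∈ d.support := Walk.fst_mem_support_of_mem_edges d h
        have hbd : b ∈ d.support := Walk.snd_mem_support_of_mem_edges d h
        have haxy : a = x ∨ a = y := by
          rcases ha with rfl | ha
          · exact Or.inl rfl
          · exact Or.inr (cross a ha had)
        have hbxy : b = x ∨ b = y := by
          rcases hb with rfl | hb
          · exact Or.inl rfl
          · exact Or.inr (cross b hb hbd)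
        rcases haxy with rfl | rfl <;> rcases hbxy with h | h
        · exact hab.ne h.symm
        · exact hnadj (h ▸ hab)
        · exact hnadj (h ▸ hab).symm
        · exact hab.ne h.symm
    -- Arc 2 : d.reverse, from x to y
    have arc2ind : IsInducedPath G d.reverse := by
      refine ⟨hd.reverse, fun a b ha hb hab => ?_⟩
      apply toSubgraph_adj_of_mem_edges
      rw [Walk.support_reverse, List.mem_reverse] at ha hb
      have hedge := hind a b (dsub a ha) (dsub b hb) hab
      rw [Walk.edges_cons, qedges, List.mem_cons, List.mem_append] at hedge
      rw [Walk.edges_reverse, List.mem_reverse]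
      rcases hedge with h | h | h
      · exfalso
        rw [Sym2.eq_iff] at h
        rcases h with ⟨rfl, rfl⟩ | ⟨rfl, rfl⟩
        · exact hv0d hb
        · exact hv0d ha
      · exfalso
        have hat : a ∈ t.support := Walk.fst_mem_support_of_mem_edges t h
        have hbt : b ∈ t.support := Walk.snd_mem_support_of_mem_edges t h
        have ha' := cross a hat ha
        have hb' := cross b hbt hb
        exact hab.ne (ha'.trans hb'.symm)
      · exact h
    -- locate w
    rw [Walk.support_cons, List.mem_cons, qsup, List.mem_append] at hw
    rcases hw with rfl | hw | hw
    · exact ⟨Walk.cons h0 t, arc1ind, Walk.start_mem_support _⟩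
    · exact ⟨Walk.cons h0 t, arc1ind, by rw [Walk.support_cons, List.mem_cons]; exact Or.inr hw⟩
    · refine ⟨d.reverse, arc2ind, ?_⟩
      rw [Walk.support_reverse, List.mem_reverse]
      exact List.mem_of_mem_tail hw

/-- Key lemma for a cycle based anywhere. -/
lemma mono_of_cycle [DecidableEq V] {G : SimpleGraph V} {x y : V} (hxy : x ≠ y)
    (hnadj : ¬ G.Adj x y) {a : V} (c : G.Walk a a) (hc : IsInducedCycle G c)
    (hx : x ∈ c.support) (hy : y ∈ c.support) {w : V} (hw : w ∈ c.support) :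
    w ∈ monoInterval G x y := by
  obtain ⟨hcyc, hind⟩ := hc
  set c' := c.rotate x hx with hc'
  have hcyc' : c'.IsCycle := hcyc.rotate (hu := hx)
  have hperm : List.Perm c'.support.tail c.support.tail := (Walk.support_rotate c x hx).perm
  have hmem : ∀ z : V, z ∈ c'.support ↔ z ∈ c.support := by
    intro z
    constructor
    · intro h
      exact List.mem_of_mem_tail (hperm.mem_iff.1
        (mem_tail_of_mem_support_closed hcyc'.ne_nil h))
    · intro h
      exact List.mem_of_mem_tail (hperm.mem_iff.2
        (mem_tail_of_mem_support_closed hcyc.ne_nil h))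
  have hind' : ∀ u v : V, u ∈ c'.support → v ∈ c'.support → G.Adj u v →
      s(u, v) ∈ c'.edges := by
    intro u v hu hv huv
    have := induced_edge_form hind ((hmem u).1 hu) ((hmem v).1 hv) huv
    exact (Walk.rotate_edges c x hx).perm.mem_iff.2 this
  exact mono_of_cycle_based hxy hnadj c' hcyc' hind' ((hmem y).2 hy) ((hmem w).2 hw)

theorem stmt12 {V : Type*} (G : SimpleGraph V)
    (hnc : ∃ a b : V, a ≠ b ∧ ¬ G.Adj a b)
    (hcyc : ∀ x y z : V, x ≠ y → x ≠ z → y ≠ z → ¬ G.Adj x y → ¬ G.Adj x z →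
      ∃ (a : V) (w : G.Walk a a), IsInducedCycle G w ∧
        x ∈ w.support ∧ y ∈ w.support ∧ z ∈ w.support) :
    Strongly2Monophonic G := by
  classical
  intro x y hxy hnadj w
  by_cases hwx : w = x
  · subst hwx
    refine ⟨w, Or.inl rfl, w, Or.inl rfl, Walk.nil, ⟨Walk.IsPath.nil, ?_⟩, by simp⟩
    intro a b ha hb hab
    simp only [Walk.support_nil, List.mem_singleton] at ha hb
    subst ha; subst hb
    exact absurd hab (G.irrefl)
  by_cases hwy : w = y
  · subst hwy
    refine ⟨w, Or.inr rfl, w, Or.inr rfl, Walk.nil, ⟨Walk.IsPath.nil, ?_⟩, by simp⟩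
    intro a b ha hb hab
    simp only [Walk.support_nil, List.mem_singleton] at ha hb
    subst ha; subst hb
    exact absurd hab (G.irrefl)
  by_cases h1 : G.Adj x w
  · by_cases h2 : G.Adj y w
    · -- w adjacent to both: the path x - w - y is induced
      refine ⟨x, Or.inl rfl, y, Or.inr rfl,
        Walk.cons h1 (Walk.cons h2.symm Walk.nil), ⟨⟨?_, ?_⟩, by simp⟩⟩
      · rw [Walk.cons_isPath_iff]
        constructor
        · rw [Walk.cons_isPath_iff]
          refine ⟨Walk.IsPath.nil, ?_⟩
          simp only [Walk.support_nil, List.mem_singleton]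
          exact fun h => hwy h
        · intro hmem
          simp only [Walk.support_cons, Walk.support_nil, List.mem_cons,
            List.mem_singleton, List.not_mem_nil, or_false] at hmem
          rcases hmem with h | h
          · exact hwx h.symm
          · exact hxy h
      · intro a b ha hb hab
        apply toSubgraph_adj_of_mem_edges
        simp only [Walk.support_cons, Walk.support_nil, List.mem_cons,
          List.mem_singleton, List.not_mem_nil, or_false] at ha hb
        simp only [Walk.edges_cons, Walk.edges_nil, List.mem_cons,
          List.not_mem_nil, or_false]
        rcases ha with rfl | rfl | rfl <;> rcases hb with h | h | h
        · exact absurd h.symm hab.ne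
        · exact Or.inl (h ▸ rfl)
        · exact absurd (h ▸ hab) hnadj
        · exact Or.inl (h ▸ Sym2.eq_swap)
        · exact absurd h.symm hab.ne
        · exact Or.inr (h ▸ rfl)
        · exact absurd (h ▸ hab).symm hnadj
        · exact Or.inr (h ▸ Sym2.eq_swap)
        · exact absurd h.symm hab.ne
    · -- y non-adjacent to both x and w
      obtain ⟨a, c, hc, hyc, hxc, hwc⟩ :=
        hcyc y x w (Ne.symm hxy) (Ne.symm hwy) (Ne.symm hwx)
          (fun h => hnadj h.symm) (fun h => h2 h)
      exact ⟨x, Or.inl rfl, y, Or.inr rfl, mono_of_cycle hxy hnadj c hc hxc hyc hwc⟩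
  · -- x non-adjacent to both y and w
    obtain ⟨a, c, hc, hxc, hyc, hwc⟩ :=
      hcyc x y w hxy (Ne.symm hwx) (Ne.symm hwy) hnadj h1
    exact ⟨x, Or.inl rfl, y, Or.inr rfl, mono_of_cycle hxy hnadj c hc hxc hyc hwc⟩
end

section
/- If G is a strongly 2-monophonic graph with two non-adjacent simplicial vertices x and y, then every vertex z ∉ {x,y} has degree n(G) − 1; in particular, x and y are the only pair of non-adjacent vertices of G. -/
open SimpleGraph

variable {V : Type*}

lemma getVert_inj_aux {G : SimpleGraph V} {u v : V} {p : G.Walk u v} (hp : p.IsPath) :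
    ∀ i j, i ≤ p.length → j ≤ p.length → p.getVert i = p.getVert j → i = j := by
  induction p with
  | nil => intro i j hi hj _; simp at hi hj; omega
  | @cons u a v h q ih =>
    rw [SimpleGraph.Walk.cons_isPath_iff] at hp
    intro i j hi hj hij
    simp only [SimpleGraph.Walk.length_cons] at hi hj
    match i, j with
    | 0, 0 => rfl
    | 0, k+1 =>
      exfalso
      apply hp.2
      rw [SimpleGraph.Walk.mem_support_iff_exists_getVert]
      refine ⟨k, ?_, by omega⟩
      simpa [SimpleGraph.Walk.getVert_cons_succ] using hij.symm
    | k+1, 0 =>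
      exfalso
      apply hp.2
      rw [SimpleGraph.Walk.mem_support_iff_exists_getVert]
      refine ⟨k, ?_, by omega⟩
      simpa [SimpleGraph.Walk.getVert_cons_succ] using hij
    | k+1, l+1 =>
      have := ih hp.1 k l (by omega) (by omega)
        (by simpa [SimpleGraph.Walk.getVert_cons_succ] using hij)
      omega

/-- A simplicial vertex cannot be an internal vertex of an induced path. -/
lemma simplicial_not_internal {G : SimpleGraph V} {u v w : V}
    (hw : G.IsClique (G.neighborSet w ∪ {w})) {p : G.Walk u v}
    (hp : IsInducedPath G p) (hws : w ∈ p.support) (hwu : w ≠ u) (hwv : w ≠ v) : False := by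
  obtain ⟨n, hn, hnle⟩ := SimpleGraph.Walk.mem_support_iff_exists_getVert.mp hws
  have hn0 : n ≠ 0 := by
    rintro rfl
    rw [SimpleGraph.Walk.getVert_zero] at hn
    exact hwu hn.symm
  have hnl : n ≠ p.length := by
    rintro rfl
    rw [SimpleGraph.Walk.getVert_length] at hn
    exact hwv hn.symm
  obtain ⟨m, rfl⟩ : ∃ m, n = m + 1 := ⟨n - 1, (Nat.succ_pred_eq_of_ne_zero hn0).symm⟩
  have hm : m + 1 < p.length := lt_of_le_of_ne hnle hnl
  have h1 : p.toSubgraph.Adj (p.getVert m) w := by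
    rw [← hn]; exact p.toSubgraph_adj_getVert (by omega)
  have h2 : p.toSubgraph.Adj w (p.getVert (m + 2)) := by
    rw [← hn]; exact p.toSubgraph_adj_getVert (by omega)
  have hane : p.getVert m ≠ p.getVert (m + 2) := by
    intro hEq
    have := getVert_inj_aux hp.1 m (m + 2) (by omega) (by omega) hEq
    omega
  have hab : G.Adj (p.getVert m) (p.getVert (m + 2)) := by
    apply hw (Set.mem_union_left _ ?_) (Set.mem_union_left _ ?_) hane
    · exact (h1.adj_sub).symm
    · exact h2.adj_sub
  have hsub : p.toSubgraph.Adj (p.getVert m) (p.getVert (m + 2)) := by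
    apply hp.2 _ _ ?_ ?_ hab
    · exact SimpleGraph.Walk.mem_support_iff_exists_getVert.mpr ⟨m, rfl, by omega⟩
    · exact SimpleGraph.Walk.mem_support_iff_exists_getVert.mpr ⟨m + 2, rfl, by omega⟩
  obtain ⟨i, hi, hil⟩ := (p.toSubgraph_adj_iff).mp hsub
  rw [Sym2.eq_iff] at hi
  rcases hi with ⟨hia, hib⟩ | ⟨hia, hib⟩
  · have e1 := getVert_inj_aux hp.1 i m (by omega) (by omega) hia
    have e2 := getVert_inj_aux hp.1 (i + 1) (m + 2) (by omega) (by omega) hib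
    omega
  · have e1 := getVert_inj_aux hp.1 i (m + 2) (by omega) (by omega) hia
    have e2 := getVert_inj_aux hp.1 (i + 1) m (by omega) (by omega) hib
    omega

/-- A simplicial vertex belongs to every monophonic set. -/
lemma simplicial_mem_of_monophonic {G : SimpleGraph V} {S : Set V} {w : V}
    (hm : IsMonophonicSet G S) (hw : G.IsClique (G.neighborSet w ∪ {w})) : w ∈ S := by
  obtain ⟨a, ha, b, hb, p, hp, hws⟩ := hm w
  by_cases hwa : w = a
  · exact hwa ▸ ha
  by_cases hwb : w = b
  · exact hwb ▸ hb
  exact absurd (simplicial_not_internal hw hp hws hwa hwb) not_false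

theorem stmt14 {V : Type*} [Fintype V] [DecidableEq V] (G : SimpleGraph V) [DecidableRel G.Adj]
    (h : Strongly2Monophonic G) (x y : V) (hxy : x ≠ y) (hadj : ¬ G.Adj x y)
    (hx : G.IsClique (G.neighborSet x ∪ {x}))
    (hy : G.IsClique (G.neighborSet y ∪ {y})) :
    (∀ z : V, z ≠ x → z ≠ y → G.degree z = Fintype.card V - 1) ∧
    (∀ a b : V, a ≠ b → ¬ G.Adj a b → ({a, b} : Set V) = {x, y}) := by
  have key : ∀ z v : V, z ≠ x → z ≠ y → v ≠ z → G.Adj z v := by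
    intro z v hzx hzy hvz
    by_contra hnv
    have hm := h z v (Ne.symm hvz) hnv
    by_cases hvx : v = x
    · subst hvx
      have := simplicial_mem_of_monophonic hm hy
      rcases this with h' | h'
      · exact hzy (by simpa using h'.symm)
      · exact hxy (by simpa using h'.symm)
    · have := simplicial_mem_of_monophonic hm hx
      rcases this with h' | h'
      · exact hzx (by simpa using h'.symm)
      · exact hvx (by simpa using h'.symm)
  constructor
  · intro z hzx hzy
    have hnb : G.neighborFinset z = Finset.univ.erase z := by
      ext v
      simp only [SimpleGraph.mem_neighborFinset, Finset.mem_erase, Finset.mem_univ, and_true]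
      constructor
      · exact fun h' => h'.ne'
      · exact fun h' => key z v hzx hzy h'
    rw [← SimpleGraph.card_neighborFinset_eq_degree, hnb,
      Finset.card_erase_of_mem (Finset.mem_univ z), Finset.card_univ]
  · intro a b hab hnab
    have haxy : a = x ∨ a = y := by
      by_contra h'
      push_neg at h'
      exact hnab (key a b h'.1 h'.2 (Ne.symm hab))
    have hbxy : b = x ∨ b = y := by
      by_contra h'
      push_neg at h'
      exact (fun h'' => hnab h''.symm) (key b a h'.1 h'.2 hab)
    rcases haxy with rfl | rfl
    · rcases hbxy with rfl | rfl
      · exact absurd rfl hab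
      · rfl
    · rcases hbxy with rfl | rfl
      · exact Set.pair_comm _ _
      · exact absurd rfl hab
end

section
/- Let G be a strongly 2-monophonic graph not isomorphic to P_3, and let x,y,z be three distinct vertices of G. Then there exist an induced x,y-path P and an induced y,z-path Q whose only common vertex is y. -/
open SimpleGraph

variable {V : Type*}

section AuxiliaryLemmas

open SimpleGraph Walk

variable {V : Type*} {G : SimpleGraph V}

lemma tosub_adj_iff_edges {u v a b : V} (p : G.Walk u v) :
    p.toSubgraph.Adj a b ↔ s(a, b) ∈ p.edges := by
  rw [← Subgraph.mem_edgeSet, mem_edges_toSubgraph]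

/-- The first vertex along a walk satisfying `S`, with structural decomposition. -/
lemma firstHit {b a : V} (s : G.Walk b a) (S : V → Prop) (ha : S a) :
    ∃ (w : V) (_ : S w) (s₁ : G.Walk b w) (s₂ : G.Walk w a),
      s = s₁.append s₂ ∧ ∀ v ∈ s₁.support, S v → v = w := by
  induction s with
  | nil => exact ⟨_, ha, Walk.nil, Walk.nil, rfl, by simp⟩
  | @cons b c a h s ih =>
    by_cases hb : S b
    · exact ⟨b, hb, Walk.nil, Walk.cons h s, rfl, by simp +contextual⟩
    · obtain ⟨w, hw, s₁, s₂, hsplit, hfirst⟩ := ih ha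
      refine ⟨w, hw, Walk.cons h s₁, s₂, by rw [Walk.cons_append, hsplit], ?_⟩
      intro v hv hS
      rw [support_cons, List.mem_cons] at hv
      rcases hv with rfl | hv'
      · exact absurd hS hb
      · exact hfirst v hv' hS

lemma walk_decompose {u t : V} (p : G.Walk u t) (hne : u ≠ t) :
    ∃ (c : V) (h : G.Adj u c) (q : G.Walk c t), p = Walk.cons h q := by
  cases p with
  | nil => exact absurd rfl hne
  | cons h q => exact ⟨_, h, q, rfl⟩

lemma extract_induced_aux (n : ℕ) : ∀ {a b : V} (w : G.Walk a b), w.length ≤ n →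
    ∃ p : G.Walk a b, IsInducedPath G p ∧ p.support ⊆ w.support := by
  induction n with
  | zero =>
    intro a b w hw
    cases w with
    | nil =>
      refine ⟨Walk.nil, ⟨Walk.IsPath.nil, ?_⟩, by simp⟩
      intro u v hu hv hadj
      simp only [support_nil, List.mem_singleton] at hu hv
      subst hu; subst hv; exact absurd hadj (G.loopless.irrefl _)
    | cons h p => simp at hw
  | succ n ih =>
    intro a b w hw
    haveI : DecidableEq V := Classical.decEq V
    cases hb : w.bypass with
    | nil =>
      refine ⟨Walk.nil, ⟨Walk.IsPath.nil, ?_⟩, by simp [Walk.start_mem_support]⟩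
      intro u v hu hv hadj
      simp only [support_nil, List.mem_singleton] at hu hv
      subst hu; subst hv; exact absurd hadj (G.loopless.irrefl _)
    | @cons _ c _ h p₁ =>
      have hbp : (w.bypass).IsPath := Walk.bypass_isPath w
      rw [hb] at hbp
      rw [Walk.cons_isPath_iff] at hbp
      obtain ⟨hp₁path, hanotin⟩ := hbp
      have hlen : p₁.length ≤ n := by
        have h1 := Walk.length_bypass_le w
        rw [hb] at h1
        simp only [Walk.length_cons] at h1
        omega
      obtain ⟨e, ⟨hepath, heind⟩, hesub⟩ := ih p₁ hlen
      obtain ⟨w'', hw'', s₁, s₂, hsplit, hfirst⟩ :=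
        firstHit e.reverse (fun t => G.Adj a t) h
      set e' : G.Walk w'' b := s₁.reverse with he'
      have hrevpath : e.reverse.IsPath := hepath.reverse
      have hnodup : (s₁.support ++ s₂.support.tail).Nodup := by
        have := hrevpath.support_nodup
        rw [hsplit, Walk.support_append] at this
        exact this
      have he'sub : e'.support ⊆ e.support := by
        intro t ht
        rw [he', Walk.support_reverse, List.mem_reverse] at ht
        have h3 : t ∈ e.reverse.support := by
          rw [hsplit]
          exact Walk.subset_support_append_left _ _ ht
        rwa [Walk.support_reverse, List.mem_reverse] at h3
      have he'path : e'.IsPath := by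
        rw [Walk.isPath_def, he', Walk.support_reverse]
        exact List.nodup_reverse.mpr (List.nodup_append.mp hnodup).1
      have hsupsub : e.support ⊆ w.support := fun t ht => by
        have h2 : t ∈ w.bypass.support := by
          rw [hb, Walk.support_cons]
          exact List.mem_cons_of_mem _ (hesub ht)
        exact Walk.support_bypass_subset w h2
      have hane : a ∉ e'.support := fun hc =>
        hanotin (hesub (he'sub hc))
      have hmem_s₁ : ∀ t, t ∈ e'.support ↔ t ∈ s₁.support := by
        intro t
        rw [he', Walk.support_reverse, List.mem_reverse]
      have honly : ∀ t ∈ e'.support, G.Adj a t → t = w'' := by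
        intro t ht hadj
        exact hfirst t ((hmem_s₁ t).mp ht) hadj
      refine ⟨Walk.cons hw'' e', ⟨?_, ?_⟩, ?_⟩
      · rw [Walk.cons_isPath_iff]
        exact ⟨he'path, hane⟩
      · intro u v hu hv hadj
        rw [Walk.support_cons, List.mem_cons] at hu hv
        have subadj_head : ∀ t, t = w'' → (Walk.cons hw'' e').toSubgraph.Adj a t := by
          rintro t rfl
          exact Subgraph.sup_adj.mpr (Or.inl (by simp [SimpleGraph.subgraphOfAdj]))
        rcases hu with rfl | hu <;> rcases hv with rfl | hv
        · exact absurd hadj (G.loopless.irrefl _)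
        · exact subadj_head v (honly v hv hadj)
        · exact (subadj_head u (honly u hu hadj.symm)).symm
        · have hE : e.toSubgraph.Adj u v :=
            heind u v (he'sub hu) (he'sub hv) hadj
          rw [tosub_adj_iff_edges] at hE
          have hEr : s(u,v) ∈ s₁.edges ++ s₂.edges := by
            rw [← Walk.edges_append, ← hsplit, Walk.edges_reverse, List.mem_reverse]
            exact hE
          rw [List.mem_append] at hEr
          rcases hEr with h1 | h2
          · have : e'.toSubgraph.Adj u v := by
              rw [tosub_adj_iff_edges, he', Walk.edges_reverse, List.mem_reverse]
              exact h1
            exact Subgraph.sup_adj.mpr (Or.inr this)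
          · exfalso
            have hu2 : u ∈ s₂.support := Walk.fst_mem_support_of_mem_edges s₂ h2
            have hu1 : u ∈ s₁.support := (hmem_s₁ u).mp hu
            have hv2 : v ∈ s₂.support := Walk.snd_mem_support_of_mem_edges s₂ h2
            have hv1 : v ∈ s₁.support := (hmem_s₁ v).mp hv
            have heq : ∀ t, t ∈ s₁.support → t ∈ s₂.support → t = w'' := by
              intro t ht1 ht2
              rw [Walk.support_eq_cons s₂, List.mem_cons] at ht2
              rcases ht2 with rfl | ht2
              · rfl
              · exfalso
                rw [List.nodup_append] at hnodup
                exact hnodup.2.2 _ ht1 _ ht2 rfl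
            have hu3 := heq u hu1 hu2
            have hv3 := heq v hv1 hv2
            rw [hu3, hv3] at hadj
            exact absurd hadj (G.loopless.irrefl _)
      · intro t ht
        rw [Walk.support_cons, List.mem_cons] at ht
        rcases ht with rfl | ht
        · exact Walk.start_mem_support w
        · exact hsupsub (he'sub ht)

/-- every walk contains an induced path between its endpoints whose support
is contained in that of the walk. -/
lemma extract_induced {a b : V} (w : G.Walk a b) :
    ∃ p : G.Walk a b, IsInducedPath G p ∧ p.support ⊆ w.support :=
  extract_induced_aux w.length w le_rfl

lemma IsInducedPath.reverse' {u v : V} {p : G.Walk u v} (h : IsInducedPath G p) :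
    IsInducedPath G p.reverse := by
  refine ⟨h.1.reverse, ?_⟩
  intro a b ha hb hadj
  rw [Walk.support_reverse, List.mem_reverse] at ha hb
  rw [Walk.toSubgraph_reverse]
  exact h.2 a b ha hb hadj

lemma mem_monoInterval_self {w c : V} (h : w ∈ monoInterval G c c) : w = c := by
  obtain ⟨p, ⟨hp, -⟩, hw⟩ := h
  rw [Walk.isPath_iff_eq_nil] at hp
  subst hp
  simpa using hw

/-- if a path starting at `u` contains the edge `s(u,w)`, then `w` is its
second vertex. -/
lemma start_edge {u t w : V} (p : G.Walk u t) (hp : p.IsPath)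
    (he : s(u, w) ∈ p.edges) :
    ∃ (h : G.Adj u w) (p' : G.Walk w t), p = Walk.cons h p' := by
  cases p with
  | nil => simp at he
  | @cons _ c _ h' q =>
    rw [Walk.edges_cons, List.mem_cons] at he
    rw [Walk.cons_isPath_iff] at hp
    rcases he with he | he
    · rw [Sym2.eq_iff] at he
      rcases he with ⟨-, rfl⟩ | ⟨rfl, rfl⟩
      · exact ⟨h', q, rfl⟩
      · exact absurd q.start_mem_support hp.2
    · exact absurd (Walk.fst_mem_support_of_mem_edges q he) hp.2

/-- an induced path between `p`,`q` containing a common neighbor `v` of both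
endpoints must be exactly `p,v,q`. -/
lemma induced_three {p q v : V} (W : G.Walk p q) (hW : IsInducedPath G W)
    (hv : v ∈ W.support) (h1 : G.Adj p v) (h2 : G.Adj v q) (hpq : p ≠ q) :
    ∀ t ∈ W.support, t = p ∨ t = v ∨ t = q := by
  have hsub1 : W.toSubgraph.Adj p v := hW.2 p v W.start_mem_support hv h1
  rw [tosub_adj_iff_edges] at hsub1
  obtain ⟨h₀, W₁, rfl⟩ := start_edge W hW.1 hsub1
  have hsub2 : (Walk.cons h₀ W₁).toSubgraph.Adj v q :=
    hW.2 v q (by simp) (Walk.end_mem_support _) h2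
  rw [tosub_adj_iff_edges, Walk.edges_cons, List.mem_cons] at hsub2
  rcases hsub2 with he | he
  · exfalso
    rw [Sym2.eq_iff] at he
    rcases he with ⟨-, h4⟩ | ⟨-, h5⟩
    · rw [h4] at h2
      exact absurd h2 (G.loopless.irrefl _)
    · exact hpq h5.symm
  · have hW₁path : W₁.IsPath := (Walk.cons_isPath_iff _ _).mp hW.1 |>.1
    obtain ⟨h₁, W₂, rfl⟩ := start_edge W₁ hW₁path he
    have : W₂ = Walk.nil := by
      rw [← Walk.isPath_iff_eq_nil]
      exact (((Walk.cons_isPath_iff _ _).mp hW₁path).1)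
    subst this
    intro t ht
    simpa using ht

lemma s2m_reachable (h : Strongly2Monophonic G) (x y z : V)
    (hxy : x ≠ y) (hxz : x ≠ z) (hyz : y ≠ z) :
    ∀ a b : V, Nonempty (G.Walk a b) := by
  intro a b
  by_contra hnw
  have hab : a ≠ b := by rintro rfl; exact hnw ⟨Walk.nil⟩
  have hadj : ¬ G.Adj a b := fun hadj => hnw ⟨Walk.cons hadj Walk.nil⟩
  have hmem : ∀ w : V, w = a ∨ w = b := by
    intro w
    obtain ⟨c, hc, d, hd, hw⟩ := h a b hab hadj w
    simp only [Set.mem_insert_iff, Set.mem_singleton_iff] at hc hd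
    rcases hc with rfl | rfl <;> rcases hd with rfl | rfl
    · exact Or.inl (mem_monoInterval_self hw)
    · obtain ⟨p, -, -⟩ := hw
      exact absurd ⟨p⟩ hnw
    · obtain ⟨p, -, -⟩ := hw
      exact absurd ⟨p.reverse⟩ hnw
    · exact Or.inr (mem_monoInterval_self hw)
  obtain h1 := hmem x
  obtain h2 := hmem y
  obtain h3 := hmem z
  rcases h1 with h1 | h1 <;> rcases h2 with h2 | h2 <;> rcases h3 with h3 | h3 <;>
    first
      | exact hxy (h1.trans h2.symm)
      | exact hxz (h1.trans h3.symm)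
      | exact hyz (h2.trans h3.symm)

lemma s2m_nocut (h : Strongly2Monophonic G)
    (hP3 : ¬ Nonempty (G ≃g pathGraph 3))
    (hconn : ∀ a b : V, Nonempty (G.Walk a b)) :
    ∀ (v a b : V), a ≠ v → b ≠ v → ∃ p : G.Walk a b, v ∉ p.support := by
  haveI : DecidableEq V := Classical.decEq V
  intro v a b hav hbv
  by_contra hno
  push_neg at hno
  obtain ⟨π⟩ := hconn a b
  have hPpath : π.bypass.IsPath := Walk.bypass_isPath π
  set P := π.bypass with hP
  have hvP : v ∈ P.support := hno P
  have hApath : (P.takeUntil v hvP).IsPath := hPpath.takeUntil _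
  have hBpath : (P.dropUntil v hvP).IsPath := hPpath.dropUntil _
  obtain ⟨z', hzadj, A', hA⟩ :=
    walk_decompose (P.takeUntil v hvP).reverse (Ne.symm hav)
  obtain ⟨y', hyadj, B', hB⟩ :=
    walk_decompose (P.dropUntil v hvP) (Ne.symm hbv)
  have hA'path : (Walk.cons hzadj A').IsPath := by rw [← hA]; exact hApath.reverse
  rw [Walk.cons_isPath_iff] at hA'path
  have hvA' : v ∉ A'.support := hA'path.2
  have hB'path : (Walk.cons hyadj B').IsPath := by rw [← hB]; exact hBpath
  rw [Walk.cons_isPath_iff] at hB'path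
  have hvB' : v ∉ B'.support := hB'path.2
  have hz'v : z' ≠ v := hzadj.ne'
  have hy'v : y' ≠ v := hyadj.ne'
  have key : ∀ W : G.Walk z' y', v ∈ W.support := by
    intro W
    by_contra hvW
    have hcomb : v ∉ ((A'.reverse.append W).append B').support := by
      simp only [Walk.mem_support_append_iff, Walk.support_reverse, List.mem_reverse]
      push_neg
      exact ⟨⟨hvA', hvW⟩, hvB'⟩
    exact hcomb (hno _)
  have hzy : z' ≠ y' := by
    rintro rfl
    have h0 := key Walk.nil
    rw [Walk.support_nil, List.mem_singleton] at h0
    exact hz'v h0.symm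
  have hnadj : ¬ G.Adj z' y' := by
    intro hadj
    have h0 := key (Walk.cons hadj Walk.nil)
    simp only [Walk.support_cons, Walk.support_nil, List.mem_cons,
      List.mem_singleton, List.not_mem_nil, or_false] at h0
    rcases h0 with h0 | h0
    · exact hz'v h0.symm
    · exact hy'v h0.symm
  have univ : ∀ t : V, t = z' ∨ t = v ∨ t = y' := by
    intro t
    obtain ⟨c, hc, d, hd, hw⟩ := h z' y' hzy hnadj t
    simp only [Set.mem_insert_iff, Set.mem_singleton_iff] at hc hd
    rcases hc with rfl | rfl <;> rcases hd with rfl | rfl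
    · exact Or.inl (mem_monoInterval_self hw)
    · obtain ⟨W, hWind, hwsup⟩ := hw
      exact induced_three W hWind (key W) hzadj.symm hyadj hzy t hwsup
    · obtain ⟨W, hWind, hwsup⟩ := hw
      exact induced_three W.reverse hWind.reverse' (key W.reverse) hzadj.symm hyadj hzy t
        (by rwa [Walk.support_reverse, List.mem_reverse])
    · exact Or.inr (Or.inr (mem_monoInterval_self hw))
  refine hP3 ⟨?_⟩
  have hvz : v ≠ z' := Ne.symm hz'v
  have hyz' : y' ≠ z' := Ne.symm hzy
  set f : V → Fin 3 := fun u => if u = z' then 0 else if u = v then 1 else 2 with hf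
  have Fz : f z' = 0 := by simp [hf]
  have Fv : f v = 1 := by simp [hf, hvz]
  have Fy : f y' = 2 := by simp [hf, hyz', hy'v]
  have P01 : (pathGraph 3).Adj 0 1 := by
    rw [pathGraph_adj]; left; rfl
  have P12 : (pathGraph 3).Adj 1 2 := by
    rw [pathGraph_adj]; left; rfl
  have nP02 : ¬ (pathGraph 3).Adj 0 2 := by
    rw [pathGraph_adj]; rintro (h0 | h0) <;> simp at h0
  refine
    { toFun := f
      invFun := fun i => if i = 0 then z' else if i = 1 then v else y'
      left_inv := ?_
      right_inv := ?_
      map_rel_iff' := ?_ }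
  · intro u
    rcases univ u with rfl | rfl | rfl
    · rw [Fz]; simp
    · rw [Fv]; simp
    · rw [Fy]; simp
  · intro i
    fin_cases i
    · simp [hf]
    · simp [hf, hvz]
    · simp [hf, hyz', hy'v]
  · intro s t
    show (pathGraph 3).Adj (f s) (f t) ↔ G.Adj s t
    rcases univ s with rfl | rfl | rfl <;> rcases univ t with rfl | rfl | rfl
    · rw [Fz]; exact iff_of_false ((pathGraph 3).loopless.irrefl _) (G.loopless.irrefl _)
    · rw [Fz, Fv]; exact iff_of_true P01 hzadj.symm
    · rw [Fz, Fy]; exact iff_of_false nP02 hnadj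
    · rw [Fv, Fz]; exact iff_of_true P01.symm hzadj
    · rw [Fv]; exact iff_of_false ((pathGraph 3).loopless.irrefl _) (G.loopless.irrefl _)
    · rw [Fv, Fy]; exact iff_of_true P12 hyadj
    · rw [Fy, Fz]; exact iff_of_false (fun hc => nP02 hc.symm) (fun hc => hnadj hc.symm)
    · rw [Fy, Fv]; exact iff_of_true P12.symm hyadj.symm
    · rw [Fy]; exact iff_of_false ((pathGraph 3).loopless.irrefl _) (G.loopless.irrefl _)

end AuxiliaryLemmas

section WhitneyLemma

open SimpleGraph Walk

variable {W : Type*} {H : SimpleGraph W}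

lemma whitney_combine [DecidableEq W] {a x' b : W}
    (p q : H.Walk a x') (hp : p.IsPath)
    (hpq : ∀ w, w ∈ p.support → w ∈ q.support → w = a ∨ w = x')
    (hxb : H.Adj x' b)
    {w : W} (r₂ : H.Walk w b)
    (hwp : w ∈ p.support)
    (hx'r : x' ∉ r₂.support)
    (hlast : ∀ v ∈ r₂.support, (v ∈ p.support ∨ v ∈ q.support) → v = w) :
    ∃ (p' q' : H.Walk a b), ∀ t, t ∈ p'.support → t ∈ q'.support →
      t = a ∨ t = b := by
  have hwx' : w ≠ x' := fun hc => hx'r (hc ▸ r₂.start_mem_support)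
  have hxtake : x' ∉ (p.takeUntil w hwp).support := by
    intro hc
    have hspec := p.take_spec hwp
    have hnodup : ((p.takeUntil w hwp).support ++
        (p.dropUntil w hwp).support.tail).Nodup := by
      rw [← Walk.support_append, hspec]
      exact hp.support_nodup
    have hx'drop : x' ∈ (p.dropUntil w hwp).support := Walk.end_mem_support _
    rw [Walk.support_eq_cons (p.dropUntil w hwp), List.mem_cons] at hx'drop
    rcases hx'drop with h1 | h1
    · exact hwx' h1.symm
    · rw [List.nodup_append] at hnodup
      exact hnodup.2.2 _ hc _ h1 rfl
  refine ⟨(p.takeUntil w hwp).append r₂, q.concat hxb, ?_⟩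
  intro t ht1 ht2
  rw [Walk.mem_support_append_iff] at ht1
  rw [Walk.support_concat, List.mem_append,
    List.mem_singleton] at ht2
  rcases ht2 with ht2 | rfl
  · rcases ht1 with ht1 | ht1
    · have htp : t ∈ p.support := Walk.support_takeUntil_subset p hwp ht1
      rcases hpq t htp ht2 with h1 | rfl
      · exact Or.inl h1
      · exact absurd ht1 hxtake
    · have := hlast t ht1 (Or.inr ht2)
      subst this
      rcases hpq t hwp ht2 with h1 | h1
      · exact Or.inl h1
      · exact absurd h1 hwx'
  · exact Or.inr rfl

/-- Whitney's 2-connectivity argument: in a connected graph with no cut vertex,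
any two distinct vertices are joined by two internally disjoint walks. -/
lemma whitney_aux
    (hconn : ∀ a b : W, Nonempty (H.Walk a b))
    (hnc : ∀ (v a b : W), a ≠ v → b ≠ v → ∃ p : H.Walk a b, v ∉ p.support) :
    ∀ (n : ℕ) (a b : W), a ≠ b → H.dist a b ≤ n →
      ∃ (p q : H.Walk a b), ∀ t, t ∈ p.support → t ∈ q.support →
        t = a ∨ t = b := by
  haveI : DecidableEq W := Classical.decEq W
  intro n
  induction n with
  | zero =>
    intro a b hab hd
    have h0 : H.dist a b = 0 := Nat.le_zero.mp hd
    have hr : H.Reachable a b := ⟨(hconn a b).some⟩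
    exact absurd (hr.dist_eq_zero_iff.mp h0) hab
  | succ n ih =>
    intro a b hab hd
    by_cases hdle : H.dist a b ≤ n
    · exact ih a b hab hdle
    have hdist : H.dist a b = n + 1 := le_antisymm hd (not_le.mp hdle)
    have hr : H.Reachable a b := ⟨(hconn a b).some⟩
    obtain ⟨g, hg⟩ := hr.exists_walk_length_eq_dist
    rw [hdist] at hg
    cases n with
    | zero =>
      obtain ⟨c, hac, g', hgeq⟩ := walk_decompose g hab
      have hlen0 : g'.length = 0 := by
        have h5 := hg
        rw [hgeq, Walk.length_cons] at h5
        omega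
      have hcb : c = b := by
        cases g' with
        | nil => rfl
        | cons h q => simp [Walk.length_cons] at hlen0
      subst hcb
      refine ⟨Walk.cons hac Walk.nil, Walk.cons hac Walk.nil, ?_⟩
      intro t ht _
      rw [Walk.support_cons, Walk.support_nil, List.mem_cons,
        List.mem_singleton] at ht
      exact ht
    | succ m =>
      obtain ⟨x', hbx', g₁, hgeq⟩ := walk_decompose g.reverse (Ne.symm hab)
      have hg₁len : g₁.length = m + 1 := by
        have hlen := congrArg Walk.length hgeq
        rw [Walk.length_reverse, Walk.length_cons, hg] at hlen
        omega
      have hdax : H.dist a x' ≤ m + 1 := by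
        have := SimpleGraph.dist_le g₁.reverse
        rwa [Walk.length_reverse, hg₁len] at this
      have hax' : a ≠ x' := by
        rintro rfl
        have h1 : H.dist a b ≤ 1 := by
          have := SimpleGraph.dist_le (Walk.cons hbx'.symm Walk.nil : H.Walk a b)
          simpa using this
        omega
      obtain ⟨p₀, q₀, hdisj₀⟩ := ih a x' hax' hdax
      set p := p₀.bypass with hpdef
      set q := q₀.bypass with hqdef
      have hp : p.IsPath := Walk.bypass_isPath p₀
      have hq : q.IsPath := Walk.bypass_isPath q₀
      have hdisj : ∀ t, t ∈ p.support → t ∈ q.support → t = a ∨ t = x' := by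
        intro t ht1 ht2
        exact hdisj₀ t (Walk.support_bypass_subset _ ht1)
          (Walk.support_bypass_subset _ ht2)
      have hbx'ne : b ≠ x' := hbx'.ne
      obtain ⟨r₀, hr₀⟩ := hnc x' a b hax' hbx'ne
      obtain ⟨w, hw, s₁, s₂, hsplit, hfirst⟩ := firstHit r₀.reverse
        (fun t => t ∈ p.support ∨ t ∈ q.support)
        (Or.inl p.start_mem_support)
      set r₂ : H.Walk w b := s₁.reverse with hr₂def
      have hr₂sub : r₂.support ⊆ r₀.support := by
        intro t ht
        rw [hr₂def, Walk.support_reverse, List.mem_reverse] at ht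
        have h6 : t ∈ r₀.reverse.support := by
          rw [hsplit]
          exact Walk.subset_support_append_left _ _ ht
        rwa [Walk.support_reverse, List.mem_reverse] at h6
      have hx'r₂ : x' ∉ r₂.support := fun hc => hr₀ (hr₂sub hc)
      have hlast : ∀ v ∈ r₂.support, (v ∈ p.support ∨ v ∈ q.support) → v = w := by
        intro v hv hS
        rw [hr₂def, Walk.support_reverse, List.mem_reverse] at hv
        exact hfirst v hv hS
      have hadjx'b : H.Adj x' b := hbx'.symm
      rcases hw with hwp | hwq
      · exact whitney_combine p q hp hdisj hadjx'b r₂ hwp hx'r₂ hlast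
      · have hdisj' : ∀ t, t ∈ q.support → t ∈ p.support → t = a ∨ t = x' :=
          fun t h1 h2 => hdisj t h2 h1
        have hlast' : ∀ v ∈ r₂.support, (v ∈ q.support ∨ v ∈ p.support) → v = w :=
          fun v hv hS => hlast v hv hS.symm
        exact whitney_combine q p hq hdisj' hadjx'b r₂ hwq hx'r₂ hlast'

end WhitneyLemma

section ExtensionGraph

open SimpleGraph Walk

variable {V : Type*}

/-- `G` plus one apex vertex adjacent to exactly `x` and `z`. -/
def extGraph (G : SimpleGraph V) (x z : V) : SimpleGraph (Option V) where
  Adj a b :=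
    (∃ u v, a = some u ∧ b = some v ∧ G.Adj u v) ∨
    (a = none ∧ (b = some x ∨ b = some z)) ∨
    (b = none ∧ (a = some x ∨ a = some z))
  symm := by
    refine ⟨?_⟩; rintro a b (⟨u, v, rfl, rfl, huv⟩ | ⟨rfl, hb⟩ | ⟨rfl, ha⟩)
    · exact Or.inl ⟨v, u, rfl, rfl, huv.symm⟩
    · exact Or.inr (Or.inr ⟨rfl, hb⟩)
    · exact Or.inr (Or.inl ⟨rfl, ha⟩)
  loopless := by
    refine ⟨?_⟩; rintro a (⟨u, v, rfl, hv, huv⟩ | ⟨rfl, (hb | hb)⟩ | ⟨rfl, (ha | ha)⟩)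
    · rw [Option.some_inj] at hv; subst hv; exact G.loopless.irrefl _ huv
    all_goals simp_all

variable {G : SimpleGraph V} {x z : V}

lemma extGraph_adj_some_some {u v : V} :
    (extGraph G x z).Adj (some u) (some v) ↔ G.Adj u v := by
  constructor
  · rintro (⟨u', v', hu, hv, huv⟩ | ⟨h0, -⟩ | ⟨h0, -⟩)
    · rw [Option.some_inj] at hu hv; subst hu; subst hv; exact huv
    all_goals simp_all
  · intro huv; exact Or.inl ⟨u, v, rfl, rfl, huv⟩

lemma extGraph_adj_none {v : Option V} :
    (extGraph G x z).Adj none v ↔ (v = some x ∨ v = some z) := by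
  constructor
  · rintro (⟨u', v', h0, -, -⟩ | ⟨-, hb⟩ | ⟨h0, ha⟩)
    · simp_all
    · exact hb
    · simp_all
  · intro hv; exact Or.inr (Or.inl ⟨rfl, hv⟩)

/-- push a walk of `G` to `extGraph`. -/
lemma push_walk {a b : V} (p : G.Walk a b) :
    ∃ q : (extGraph G x z).Walk (some a) (some b),
      q.support = p.support.map some := by
  refine ⟨p.map ⟨some, fun h => extGraph_adj_some_some.mpr h⟩, ?_⟩
  rw [Walk.support_map]
  rfl

/-- pull a walk of `extGraph` avoiding the apex back to `G`. -/
lemma pull_walk : ∀ {s t : Option V} (p : (extGraph G x z).Walk s t) {u v : V},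
    s = some u → t = some v → none ∉ p.support →
    ∃ q : G.Walk u v, ∀ w : V, w ∈ q.support ↔ some w ∈ p.support := by
  intro s t p
  induction p with
  | nil =>
    intro u v hu hv _
    subst hu
    rw [Option.some_inj] at hv
    subst hv
    exact ⟨Walk.nil, by simp⟩
  | @cons s m t h p ih =>
    intro u v hu hv hnone
    subst hu
    rw [Walk.support_cons, List.mem_cons] at hnone
    push_neg at hnone
    obtain ⟨-, hnone'⟩ := hnone
    have hm : m ≠ none := fun hc => hnone' (hc ▸ p.start_mem_support)
    obtain ⟨c, rfl⟩ := Option.ne_none_iff_exists'.mp hm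
    obtain ⟨q, hq⟩ := ih rfl hv hnone'
    refine ⟨Walk.cons (extGraph_adj_some_some.mp h) q, ?_⟩
    intro w
    rw [Walk.support_cons, Walk.support_cons, List.mem_cons, List.mem_cons,
      Option.some_inj]
    constructor
    · rintro (rfl | hw)
      · exact Or.inl rfl
      · exact Or.inr ((hq w).mp hw)
    · rintro (rfl | hw)
      · exact Or.inl rfl
      · exact Or.inr ((hq w).mpr hw)

lemma extGraph_conn (hconn : ∀ a b : V, Nonempty (G.Walk a b)) :
    ∀ a b : Option V, Nonempty ((extGraph G x z).Walk a b) := by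
  have base : ∀ a b : V, Nonempty ((extGraph G x z).Walk (some a) (some b)) := by
    intro a b
    obtain ⟨p⟩ := hconn a b
    obtain ⟨q, -⟩ := push_walk (x := x) (z := z) p
    exact ⟨q⟩
  have toNone : ∀ a : V, Nonempty ((extGraph G x z).Walk (some a) none) := by
    intro a
    obtain ⟨q⟩ := base a x
    exact ⟨q.append (Walk.cons (extGraph_adj_none.mpr (Or.inl rfl)).symm Walk.nil)⟩
  rintro (_ | a) (_ | b)
  · exact ⟨Walk.nil⟩
  · exact ⟨(toNone b).some.reverse⟩
  · exact toNone a
  · exact base a b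

lemma extGraph_nocut (hxz : x ≠ z)
    (hconn : ∀ a b : V, Nonempty (G.Walk a b))
    (hnc : ∀ (v a b : V), a ≠ v → b ≠ v → ∃ p : G.Walk a b, v ∉ p.support) :
    ∀ (v a b : Option V), a ≠ v → b ≠ v →
      ∃ p : (extGraph G x z).Walk a b, v ∉ p.support := by
  have pushAvoid : ∀ (a b c : V), a ≠ c → b ≠ c →
      ∃ p : (extGraph G x z).Walk (some a) (some b),
        some c ∉ p.support ∧ none ∉ p.support := by
    intro a b c hac hbc
    obtain ⟨p, hp⟩ := hnc c a b hac hbc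
    obtain ⟨q, hq⟩ := push_walk (x := x) (z := z) p
    refine ⟨q, ?_, ?_⟩
    · rw [hq]
      intro hc
      obtain ⟨w, hw, hw2⟩ := List.mem_map.mp hc
      rw [Option.some_inj] at hw2
      exact hp (hw2 ▸ hw)
    · rw [hq]
      intro hc
      obtain ⟨w, -, hw2⟩ := List.mem_map.mp hc
      exact Option.some_ne_none w hw2
  have noneAvoid : ∀ (b c : V), b ≠ c →
      ∃ p : (extGraph G x z).Walk none (some b), some c ∉ p.support := by
    intro b c hbc
    have hex : ∃ t : V, (t = x ∨ t = z) ∧ t ≠ c := by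
      by_cases hxc : x = c
      · exact ⟨z, Or.inr rfl, fun hzc => hxz (hxc.trans hzc.symm)⟩
      · exact ⟨x, Or.inl rfl, hxc⟩
    obtain ⟨t, ht, htc⟩ := hex
    obtain ⟨q, hq1, -⟩ := pushAvoid t b c htc hbc
    have hadj : (extGraph G x z).Adj none (some t) := by
      rw [extGraph_adj_none]
      rcases ht with rfl | rfl
      · exact Or.inl rfl
      · exact Or.inr rfl
    refine ⟨Walk.cons hadj q, ?_⟩
    rw [Walk.support_cons, List.mem_cons]
    rintro (hc | hc)
    · exact Option.some_ne_none c hc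
    · exact hq1 hc
  rintro (_ | v) (_ | a) (_ | b) hav hbv
  · exact absurd rfl hav
  · exact absurd rfl hav
  · exact absurd rfl hbv
  · obtain ⟨p⟩ := hconn a b
    obtain ⟨q, hq⟩ := push_walk (x := x) (z := z) p
    refine ⟨q, ?_⟩
    rw [hq]
    intro hc
    obtain ⟨w, -, hw2⟩ := List.mem_map.mp hc
    exact Option.some_ne_none w hw2
  · exact ⟨Walk.nil, by simp⟩
  · exact noneAvoid b v (fun hc => hbv (congrArg some hc))
  · obtain ⟨p, hp⟩ := noneAvoid a v (fun hc => hav (congrArg some hc))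
    exact ⟨p.reverse, by rwa [Walk.support_reverse, List.mem_reverse]⟩
  · obtain ⟨p, hp1, -⟩ := pushAvoid a b v (fun hc => hav (congrArg some hc))
      (fun hc => hbv (congrArg some hc))
    exact ⟨p, hp1⟩

end ExtensionGraph


theorem stmt16 {V : Type*} (G : SimpleGraph V) (h : Strongly2Monophonic G)
    (hP3 : ¬ Nonempty (G ≃g pathGraph 3))
    (x y z : V) (hxy : x ≠ y) (hxz : x ≠ z) (hyz : y ≠ z) :
    ∃ (P : G.Walk x y) (Q : G.Walk y z),
      IsInducedPath G P ∧ IsInducedPath G Q ∧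
      ∀ w : V, w ∈ P.support → w ∈ Q.support → w = y := by
  classical
  have hconn : ∀ a b : V, Nonempty (G.Walk a b) := s2m_reachable h x y z hxy hxz hyz
  have hnc := s2m_nocut h hP3 hconn
  have hconn' := extGraph_conn (G := G) (x := x) (z := z) hconn
  have hnc' := extGraph_nocut hxz hconn hnc
  have hne : (some y : Option V) ≠ none := Option.some_ne_none y
  obtain ⟨p₁, q₁, hdisj₁⟩ := whitney_aux hconn' hnc'
    ((extGraph G x z).dist (some y) none) (some y) none hne le_rfl
  set p := p₁.bypass with hpdef
  set q := q₁.bypass with hqdef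
  have hp : p.IsPath := SimpleGraph.Walk.bypass_isPath p₁
  have hq : q.IsPath := SimpleGraph.Walk.bypass_isPath q₁
  have hdisj : ∀ t, t ∈ p.support → t ∈ q.support → t = some y ∨ t = none := by
    intro t ht1 ht2
    exact hdisj₁ t (SimpleGraph.Walk.support_bypass_subset _ ht1)
      (SimpleGraph.Walk.support_bypass_subset _ ht2)
  obtain ⟨α, hαadj, p₂, hpdec⟩ := walk_decompose p.reverse (Ne.symm hne)
  obtain ⟨β, hβadj, q₂, hqdec⟩ := walk_decompose q.reverse (Ne.symm hne)
  have hα := extGraph_adj_none.mp hαadj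
  have hβ := extGraph_adj_none.mp hβadj
  have hprev : (SimpleGraph.Walk.cons hαadj p₂).IsPath := by
    rw [← hpdec]; exact hp.reverse
  rw [SimpleGraph.Walk.cons_isPath_iff] at hprev
  have hnonep₂ : none ∉ p₂.support := hprev.2
  have hqrev : (SimpleGraph.Walk.cons hβadj q₂).IsPath := by
    rw [← hqdec]; exact hq.reverse
  rw [SimpleGraph.Walk.cons_isPath_iff] at hqrev
  have hnoneq₂ : none ∉ q₂.support := hqrev.2
  have hPmem : ∀ t, t ∈ p₂.support → t ∈ p.support := by
    intro t ht
    have h1 : t ∈ p.reverse.support := by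
      rw [hpdec, SimpleGraph.Walk.support_cons]
      exact List.mem_cons_of_mem _ ht
    rwa [SimpleGraph.Walk.support_reverse, List.mem_reverse] at h1
  have hQmem : ∀ t, t ∈ q₂.support → t ∈ q.support := by
    intro t ht
    have h1 : t ∈ q.reverse.support := by
      rw [hqdec, SimpleGraph.Walk.support_cons]
      exact List.mem_cons_of_mem _ ht
    rwa [SimpleGraph.Walk.support_reverse, List.mem_reverse] at h1
  -- the two walks cannot leave through the same contact vertex
  have hsame : ∀ t : V, y ≠ t → α = some t → β = some t → False := by
    intro t hty hαt hβt
    have h1 : (some t : Option V) ∈ p.support := by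
      apply hPmem
      rw [← hαt]
      exact p₂.start_mem_support
    have h2 : (some t : Option V) ∈ q.support := by
      apply hQmem
      rw [← hβt]
      exact q₂.start_mem_support
    rcases hdisj (some t) h1 h2 with h3 | h3
    · rw [Option.some_inj] at h3
      exact hty h3.symm
    · exact Option.some_ne_none t h3
  -- main construction, given the contact vertices x (for p) and z (for q)
  have build : ∀ (p₂' : (extGraph G x z).Walk (some x) (some y))
      (q₂' : (extGraph G x z).Walk (some z) (some y)),
      none ∉ p₂'.support → none ∉ q₂'.support →
      (∀ t, t ∈ p₂'.support → t ∈ p.support ∨ t ∈ q.support) →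
      (∀ t, t ∈ q₂'.support → t ∈ p.support ∨ t ∈ q.support) →
      ((∀ t, t ∈ p₂'.support → t ∈ p.support) ∧
        (∀ t, t ∈ q₂'.support → t ∈ q.support) ∨
       (∀ t, t ∈ p₂'.support → t ∈ q.support) ∧
        (∀ t, t ∈ q₂'.support → t ∈ p.support)) →
      ∃ (P : G.Walk x y) (Q : G.Walk y z),
        IsInducedPath G P ∧ IsInducedPath G Q ∧
        ∀ w : V, w ∈ P.support → w ∈ Q.support → w = y := by
    intro p₂' q₂' hnp hnq _ _ hsides
    obtain ⟨PG, hPG⟩ := pull_walk p₂' rfl rfl hnp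
    obtain ⟨QG, hQG⟩ := pull_walk q₂' rfl rfl hnq
    obtain ⟨P, hPind, hPsub⟩ := extract_induced PG
    obtain ⟨Q₀, hQind, hQsub⟩ := extract_induced QG
    refine ⟨P, Q₀.reverse, hPind, hQind.reverse', ?_⟩
    intro w hwP hwQ
    rw [SimpleGraph.Walk.support_reverse, List.mem_reverse] at hwQ
    have h1 : (some w : Option V) ∈ p₂'.support := (hPG w).mp (hPsub hwP)
    have h2 : (some w : Option V) ∈ q₂'.support := (hQG w).mp (hQsub hwQ)
    have h3 : (some w : Option V) ∈ p.support ∧ (some w : Option V) ∈ q.support := by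
      rcases hsides with ⟨hA, hB⟩ | ⟨hA, hB⟩
      · exact ⟨hA _ h1, hB _ h2⟩
      · exact ⟨hB _ h2, hA _ h1⟩
    rcases hdisj (some w) h3.1 h3.2 with h4 | h4
    · rwa [Option.some_inj] at h4
    · exact absurd h4 (Option.some_ne_none w)
  rcases hα with hα | hα <;> rcases hβ with hβ | hβ
  · exact absurd (hsame x hxy.symm hα hβ) not_false
  · -- α = some x, β = some z
    subst hα; subst hβ
    exact build p₂ q₂ hnonep₂ hnoneq₂
      (fun t ht => Or.inl (hPmem t ht)) (fun t ht => Or.inr (hQmem t ht))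
      (Or.inl ⟨hPmem, hQmem⟩)
  · -- α = some z, β = some x
    subst hα; subst hβ
    exact build q₂ p₂ hnoneq₂ hnonep₂
      (fun t ht => Or.inr (hQmem t ht)) (fun t ht => Or.inl (hPmem t ht))
      (Or.inr ⟨hQmem, hPmem⟩)
  · exact absurd (hsame z hyz hα hβ) not_false
end
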